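/- arXiv:2010.05972 — 3 statements merged into one kernel-verified Lean document; each statement's English description precedes it below -/
import Mathlib

section
/- Let k ≥ 2, s ≥ 1, and 1 ≤ j ≤ k−1 be integers, and θ ∈ ℝ. For a finite set S of positive integers with |S| = m and max(S) ≤ k+m−1, define A_S = {0,1,…,k+m−1} \ S and F(A) = ∏_{a<b, a,b ∈ A} sin((b−a)θ); write F₀ = F({0,…,k−1}). Then F(A_{{j}}) · F(A_{[s]}) = F₀ · F(A_{[s−1] ∪ {j+s}}) + F₀ · F(A_{[s] ∪ {j+s}}), where [m] denotes {1,…,m} and [0] = ∅. -/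
/-- `sineVandermonde θ A = ∏_{a<b, a,b ∈ A} sin((b−a)θ)`. -/
noncomputable def sineVandermonde (θ : ℝ) (A : Finset ℕ) : ℝ :=
  ∏ p ∈ (A ×ˢ A).filter (fun p => p.1 < p.2), Real.sin (((p.2 - p.1 : ℕ) : ℝ) * θ)

/-- `gapSet k S = {0,1,…,k+|S|−1} \ S`. -/
def gapSet (k : ℕ) (S : Finset ℕ) : Finset ℕ :=
  Finset.range (k + S.card) \ S

open Finset

noncomputable def uu (θ : ℝ) (d : ℕ) : ℝ := Real.sin ((d : ℝ) * θ)

noncomputable def TT (θ : ℝ) (a b : ℕ) : ℝ := ∏ d ∈ Finset.Ico a b, uu θ d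

lemma sv_eq (θ : ℝ) (A : Finset ℕ) :
    sineVandermonde θ A = ∏ p ∈ (A ×ˢ A).filter (fun p => p.1 < p.2), uu θ (p.2 - p.1) := rfl

lemma sv_singleton (θ : ℝ) (x : ℕ) : sineVandermonde θ {x} = 1 := by
  rw [sv_eq]
  convert Finset.prod_empty
  ext ⟨a, b⟩
  simp only [Finset.mem_filter, Finset.mem_product, Finset.mem_singleton, Finset.notMem_empty,
    iff_false]
  rintro ⟨⟨rfl, rfl⟩, h⟩; omega

lemma sv_split (θ : ℝ) (A B : Finset ℕ) (h : ∀ a ∈ A, ∀ b ∈ B, a < b) :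
    sineVandermonde θ (A ∪ B)
      = sineVandermonde θ A * sineVandermonde θ B * ∏ a ∈ A, ∏ b ∈ B, uu θ (b - a) := by
  simp only [sv_eq]
  have key : ((A ∪ B) ×ˢ (A ∪ B)).filter (fun p => p.1 < p.2)
      = ((A ×ˢ A).filter (fun p => p.1 < p.2)) ∪
        (((B ×ˢ B).filter (fun p => p.1 < p.2)) ∪ A ×ˢ B) := by
    ext ⟨x, y⟩
    simp only [Finset.mem_filter, Finset.mem_product, Finset.mem_union]
    constructor
    · rintro ⟨⟨hx, hy⟩, hxy⟩
      rcases hx with hx | hx <;> rcases hy with hy | hy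
      · exact Or.inl ⟨⟨hx, hy⟩, hxy⟩
      · exact Or.inr (Or.inr ⟨hx, hy⟩)
      · exact absurd (h y hy x hx) (by omega)
      · exact Or.inr (Or.inl ⟨⟨hx, hy⟩, hxy⟩)
    · rintro (⟨⟨hx, hy⟩, hxy⟩ | ⟨⟨hx, hy⟩, hxy⟩ | ⟨hx, hy⟩)
      · exact ⟨⟨Or.inl hx, Or.inl hy⟩, hxy⟩
      · exact ⟨⟨Or.inr hx, Or.inr hy⟩, hxy⟩
      · exact ⟨⟨Or.inl hx, Or.inr hy⟩, h x hx y hy⟩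
  have d2 : Disjoint ((B ×ˢ B).filter (fun p => p.1 < p.2)) (A ×ˢ B) := by
    rw [Finset.disjoint_left]
    rintro ⟨x, y⟩ hp hq
    simp only [Finset.mem_filter, Finset.mem_product] at hp hq
    exact absurd (h x hq.1 x hp.1.1) (by omega)
  have d1 : Disjoint ((A ×ˢ A).filter (fun p => p.1 < p.2))
      (((B ×ˢ B).filter (fun p => p.1 < p.2)) ∪ A ×ˢ B) := by
    rw [Finset.disjoint_left]
    rintro ⟨x, y⟩ hp hq
    simp only [Finset.mem_filter, Finset.mem_product, Finset.mem_union] at hp hq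
    rcases hq with ⟨⟨hx, _⟩, _⟩ | ⟨_, hy⟩
    · exact absurd (h x hp.1.1 x hx) (by omega)
    · exact absurd (h y hp.1.2 y hy) (by omega)
  rw [key, Finset.prod_union d1, Finset.prod_union d2, Finset.prod_product, mul_assoc]

noncomputable def GG (θ : ℝ) (n : ℕ) : ℝ := sineVandermonde θ (Finset.range n)

noncomputable def CC (θ : ℝ) (m n : ℕ) : ℝ :=
  ∏ i ∈ Finset.range m, ∏ c ∈ Finset.range n, uu θ (2 + i + c)

lemma sv_Ico (θ : ℝ) (a n : ℕ) : sineVandermonde θ (Finset.Ico a (a + n)) = GG θ n := by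
  simp only [sv_eq, GG]
  apply Finset.prod_nbij' (fun p => (p.1 - a, p.2 - a)) (fun p => (p.1 + a, p.2 + a))
  · rintro ⟨x, y⟩ hp
    simp only [Finset.mem_filter, Finset.mem_product, Finset.mem_Ico, Finset.mem_range] at hp ⊢
    omega
  · rintro ⟨x, y⟩ hp
    simp only [Finset.mem_filter, Finset.mem_product, Finset.mem_Ico, Finset.mem_range] at hp ⊢
    omega
  · rintro ⟨x, y⟩ hp
    simp only [Finset.mem_filter, Finset.mem_product, Finset.mem_Ico] at hp
    simp only [Prod.mk.injEq]
    omega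
  · rintro ⟨x, y⟩ hp
    simp only [Prod.mk.injEq]
    omega
  · rintro ⟨x, y⟩ hp
    simp only [Finset.mem_filter, Finset.mem_product, Finset.mem_Ico] at hp
    congr 1
    omega

lemma TT_single (θ : ℝ) (a : ℕ) : TT θ a (a + 1) = uu θ a := by simp [TT]

lemma TT_split (θ : ℝ) {a b c : ℕ} (h1 : a ≤ b) (h2 : b ≤ c) :
    TT θ a b * TT θ b c = TT θ a c := Finset.prod_Ico_consecutive _ h1 h2

lemma TT_eq_range (θ : ℝ) (a m : ℕ) : TT θ a (a + m) = ∏ i ∈ Finset.range m, uu θ (a + i) := by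
  rw [TT, Finset.prod_Ico_eq_prod_range]
  simp

lemma GG_succ (θ : ℝ) (n : ℕ) : GG θ (n + 1) = GG θ n * TT θ 1 (1 + n) := by
  have hset : Finset.range (n + 1) = Finset.range n ∪ {n} := by
    ext x; simp only [Finset.mem_range, Finset.mem_union, Finset.mem_singleton]; omega
  rw [GG, hset, sv_split θ _ _ (by intro a ha b hb; simp at ha hb; omega), sv_singleton,
    TT_eq_range]
  simp only [Finset.prod_singleton]
  rw [← Finset.prod_range_reflect (fun i => uu θ (1 + i)) n]
  rw [GG, mul_one]
  congr 1
  apply Finset.prod_congr rfl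
  intro i hi
  simp only [Finset.mem_range] at hi
  congr 1
  omega

lemma CC_succ_right (θ : ℝ) (m n : ℕ) :
    CC θ m (n + 1) = CC θ m n * TT θ (n + 2) ((n + 2) + m) := by
  simp only [CC, Finset.prod_range_succ, Finset.prod_mul_distrib, TT_eq_range]
  congr 1
  apply Finset.prod_congr rfl
  intro i _
  congr 1
  omega

lemma CC_succ_left (θ : ℝ) (m n : ℕ) :
    CC θ (m + 1) n = CC θ m n * TT θ (m + 2) ((m + 2) + n) := by
  simp only [CC, Finset.prod_range_succ, TT_eq_range]
  congr 1
  apply Finset.prod_congr rfl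
  intro c _
  congr 1
  omega

lemma cross_cc (θ : ℝ) (p m n : ℕ) :
    ∏ a ∈ Finset.Ico p (p + m), ∏ b ∈ Finset.Ico (p + m + 1) ((p + m + 1) + n), uu θ (b - a)
      = CC θ m n := by
  rw [Finset.prod_Ico_eq_prod_range]
  simp only [Nat.add_sub_cancel_left]
  rw [CC, ← Finset.prod_range_reflect (fun i => ∏ c ∈ Finset.range n, uu θ (2 + i + c)) m]
  apply Finset.prod_congr rfl
  intro i hi
  simp only [Finset.mem_range] at hi
  rw [Finset.prod_Ico_eq_prod_range]
  simp only [Nat.add_sub_cancel_left]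
  apply Finset.prod_congr rfl
  intro c _
  congr 1
  omega

lemma cross_single (θ : ℝ) (a b : ℕ) :
    ∏ x ∈ ({0} : Finset ℕ), ∏ d ∈ Finset.Ico a b, uu θ (d - x) = TT θ a b := by
  simp [TT]

lemma TT_peel (θ : ℝ) {a b : ℕ} (h : a ≤ b) : TT θ a (b + 1) = TT θ a b * uu θ b := by
  rw [← TT_split θ h (Nat.le_succ b), TT_single]

lemma TT_peel_left (θ : ℝ) {a b : ℕ} (h : a + 1 ≤ b) : TT θ a b = uu θ a * TT θ (a + 1) b := by
  rw [← TT_split θ (Nat.le_succ a) h, TT_single]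

lemma sin_ptolemy (x y z : ℝ) :
    Real.sin (x + y) * Real.sin (y + z)
      = Real.sin x * Real.sin z + Real.sin y * Real.sin (x + y + z) := by
  simp only [Real.sin_add, Real.cos_add]
  linear_combination (Real.sin x * Real.sin z) * (Real.sin_sq_add_cos_sq y)

/-- The straightening identity `η_j · η_{[s]} = η_{[s−1]∪{j+s}} + η_{[s]∪{j+s}}` among
sine-products, in division-free form: with `F₀ = F({0,…,k−1})`,
`F(A_{{j}})·F(A_{[s]}) = F₀·F(A_{[s−1]∪{j+s}}) + F₀·F(A_{[s]∪{j+s}})`. -/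
theorem sine_straightening_relation (k s j : ℕ) (hk : 2 ≤ k) (hs : 1 ≤ s)
    (hj1 : 1 ≤ j) (hj2 : j ≤ k - 1) (θ : ℝ) :
    sineVandermonde θ (gapSet k {j}) * sineVandermonde θ (gapSet k (Finset.Icc 1 s))
      = sineVandermonde θ (gapSet k ∅)
          * sineVandermonde θ (gapSet k (insert (j + s) (Finset.Icc 1 (s - 1))))
        + sineVandermonde θ (gapSet k ∅)
          * sineVandermonde θ (gapSet k (insert (j + s) (Finset.Icc 1 s))) := by
  obtain ⟨J, rfl⟩ : ∃ J, j = J + 1 := ⟨j - 1, by omega⟩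
  obtain ⟨L, rfl⟩ : ∃ L, k = J + L + 2 := ⟨k - J - 2, by omega⟩
  -- the five gap sets as unions of intervals
  have hF1 : sineVandermonde θ (gapSet (J + L + 2) {J + 1})
      = GG θ (J + 1) * GG θ (L + 1) * CC θ (J + 1) (L + 1) := by
    have hset : gapSet (J + L + 2) {J + 1}
        = Finset.Ico 0 (0 + (J + 1)) ∪
            Finset.Ico (0 + (J + 1) + 1) ((0 + (J + 1) + 1) + (L + 1)) := by
      ext x
      simp only [gapSet, Finset.mem_sdiff, Finset.mem_range, Finset.mem_singleton,
        Finset.mem_union, Finset.mem_Ico, Finset.card_singleton]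
      omega
    rw [hset, sv_split θ _ _ (by intro a ha b hb; simp only [Finset.mem_Ico] at ha hb; omega),
      sv_Ico, sv_Ico, cross_cc]
  have hF2 : sineVandermonde θ (gapSet (J + L + 2) (Finset.Icc 1 s))
      = GG θ (J + L + 1) * TT θ (s + 1) (J + L + s + 2) := by
    have hset : gapSet (J + L + 2) (Finset.Icc 1 s)
        = {0} ∪ Finset.Ico (s + 1) ((s + 1) + (J + L + 1)) := by
      ext x
      simp only [gapSet, Finset.mem_sdiff, Finset.mem_range, Finset.mem_Icc, Finset.mem_union,
        Finset.mem_singleton, Finset.mem_Ico, Nat.card_Icc]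
      omega
    rw [hset, sv_split θ _ _ (by intro a ha b hb; simp only [Finset.mem_singleton, Finset.mem_Ico] at ha hb; omega), sv_singleton, sv_Ico, cross_single,
      (by omega : (s + 1) + (J + L + 1) = J + L + s + 2)]
    ring
  have hF0 : sineVandermonde θ (gapSet (J + L + 2) ∅) = GG θ (J + L + 2) := by
    have hset : gapSet (J + L + 2) ∅ = Finset.range (J + L + 2) := by
      simp [gapSet]
    rw [hset]; rfl
  have hF3 : sineVandermonde θ (gapSet (J + L + 2) (insert (J + 1 + s) (Finset.Icc 1 (s - 1))))
      = GG θ (J + 1) * GG θ L * CC θ (J + 1) L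
          * (TT θ s (s + J + 1) * TT θ (s + J + 2) (J + L + s + 2)) := by
    have hc : (insert (J + 1 + s) (Finset.Icc 1 (s - 1))).card = s := by
      rw [Finset.card_insert_of_notMem (by simp only [Finset.mem_Icc]; omega)]
      rw [Nat.card_Icc]; omega
    have hset : gapSet (J + L + 2) (insert (J + 1 + s) (Finset.Icc 1 (s - 1)))
        = {0} ∪ (Finset.Ico s (s + (J + 1)) ∪
            Finset.Ico (s + (J + 1) + 1) ((s + (J + 1) + 1) + L)) := by
      ext x
      simp only [gapSet, hc, Finset.mem_sdiff, Finset.mem_range, Finset.mem_insert,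
        Finset.mem_Icc, Finset.mem_union, Finset.mem_singleton, Finset.mem_Ico]
      omega
    have hd : Disjoint (Finset.Ico s (s + (J + 1)))
        (Finset.Ico (s + (J + 1) + 1) ((s + (J + 1) + 1) + L)) := by
      rw [Finset.disjoint_left]
      intro x hx hy
      simp only [Finset.mem_Ico] at hx hy
      omega
    rw [hset, sv_split θ _ _ (by intro a ha b hb; simp only [Finset.mem_singleton, Finset.mem_union, Finset.mem_Ico] at ha hb; omega), sv_split θ _ _ (by intro a ha b hb; simp only [Finset.mem_Ico] at ha hb; omega), sv_singleton, sv_Ico, sv_Ico, cross_cc, Finset.prod_singleton]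
    rw [Finset.prod_union hd]
    simp only [Nat.sub_zero]
    rw [(by omega : s + (J + 1) = s + J + 1), (by omega : s + J + 1 + 1 = s + J + 2),
      (by omega : s + J + 2 + L = J + L + s + 2)]
    simp only [TT]
    ring
  have hF4 : sineVandermonde θ (gapSet (J + L + 2) (insert (J + 1 + s) (Finset.Icc 1 s)))
      = GG θ J * GG θ (L + 1) * CC θ J (L + 1)
          * (TT θ (s + 1) (s + J + 1) * TT θ (s + J + 2) (J + L + s + 3)) := by
    have hc : (insert (J + 1 + s) (Finset.Icc 1 s)).card = s + 1 := by
      rw [Finset.card_insert_of_notMem (by simp only [Finset.mem_Icc]; omega)]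
      rw [Nat.card_Icc]; omega
    have hset : gapSet (J + L + 2) (insert (J + 1 + s) (Finset.Icc 1 s))
        = {0} ∪ (Finset.Ico (s + 1) ((s + 1) + J) ∪
            Finset.Ico ((s + 1) + J + 1) (((s + 1) + J + 1) + (L + 1))) := by
      ext x
      simp only [gapSet, hc, Finset.mem_sdiff, Finset.mem_range, Finset.mem_insert,
        Finset.mem_Icc, Finset.mem_union, Finset.mem_singleton, Finset.mem_Ico]
      omega
    have hd : Disjoint (Finset.Ico (s + 1) ((s + 1) + J))
        (Finset.Ico ((s + 1) + J + 1) (((s + 1) + J + 1) + (L + 1))) := by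
      rw [Finset.disjoint_left]
      intro x hx hy
      simp only [Finset.mem_Ico] at hx hy
      omega
    rw [hset, sv_split θ _ _ (by intro a ha b hb; simp only [Finset.mem_singleton, Finset.mem_union, Finset.mem_Ico] at ha hb; omega), sv_split θ _ _ (by intro a ha b hb; simp only [Finset.mem_Ico] at ha hb; omega), sv_singleton, sv_Ico, sv_Ico, cross_cc, Finset.prod_singleton]
    rw [Finset.prod_union hd]
    simp only [Nat.sub_zero]
    rw [(by omega : (s + 1) + J = s + J + 1), (by omega : s + J + 1 + 1 = s + J + 2),
      (by omega : s + J + 2 + (L + 1) = J + L + s + 3)]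
    simp only [TT]
    ring
  rw [hF1, hF2, hF0, hF3, hF4]
  -- expansions
  have x1 : GG θ (L + 1) = GG θ L * TT θ 1 (L + 1) := by
    rw [GG_succ, (by omega : 1 + L = L + 1)]
  have x2 : GG θ (J + 1) = GG θ J * TT θ 1 (J + 1) := by
    rw [GG_succ, (by omega : 1 + J = J + 1)]
  have x3 : GG θ (J + L + 2) = GG θ (J + L + 1) * TT θ 1 (J + L + 2) := by
    rw [(by omega : J + L + 2 = (J + L + 1) + 1), GG_succ,
      (by omega : 1 + (J + L + 1) = J + L + 2)]
  have x4 : CC θ (J + 1) (L + 1) = CC θ (J + 1) L * TT θ (L + 2) (J + L + 3) := by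
    rw [CC_succ_right, (by omega : (L + 2) + (J + 1) = J + L + 3)]
  have x5 : CC θ (J + 1) L = CC θ J L * TT θ (J + 2) (J + L + 2) := by
    rw [CC_succ_left, (by omega : (J + 2) + L = J + L + 2)]
  have x6 : CC θ J (L + 1) = CC θ J L * TT θ (L + 2) (J + L + 2) := by
    rw [CC_succ_right, (by omega : (L + 2) + J = J + L + 2)]
  have y1 : TT θ (L + 2) (J + L + 3) = TT θ (L + 2) (J + L + 2) * uu θ (J + L + 2) := by
    rw [(by omega : J + L + 3 = (J + L + 2) + 1), TT_peel θ (by omega)]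
  have y2 : TT θ (s + 1) (J + L + s + 2)
      = TT θ (s + 1) (s + J + 1) * (uu θ (s + J + 1) * TT θ (s + J + 2) (J + L + s + 2)) := by
    rw [← TT_split θ ((by omega : s + 1 ≤ s + J + 1))
      ((by omega : s + J + 1 ≤ J + L + s + 2)),
      TT_peel_left θ ((by omega : s + J + 1 + 1 ≤ J + L + s + 2)),
      (by omega : s + J + 1 + 1 = s + J + 2)]
  have y3 : TT θ 1 (J + L + 2)
      = TT θ 1 (L + 1) * (uu θ (L + 1) * TT θ (L + 2) (J + L + 2)) := by
    rw [← TT_split θ ((by omega : 1 ≤ L + 1)) ((by omega : L + 1 ≤ J + L + 2)),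
      TT_peel_left θ ((by omega : L + 1 + 1 ≤ J + L + 2)),
      (by omega : L + 1 + 1 = L + 2)]
  have y4 : TT θ s (s + J + 1) = uu θ s * TT θ (s + 1) (s + J + 1) := by
    rw [TT_peel_left θ ((by omega : s + 1 ≤ s + J + 1))]
  have y5 : TT θ (s + J + 2) (J + L + s + 3)
      = TT θ (s + J + 2) (J + L + s + 2) * uu θ (J + L + s + 2) := by
    rw [(by omega : J + L + s + 3 = (J + L + s + 2) + 1), TT_peel θ (by omega)]
  have y6 : TT θ 1 (J + L + 2)
      = TT θ 1 (J + 1) * (uu θ (J + 1) * TT θ (J + 2) (J + L + 2)) := by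
    rw [← TT_split θ ((by omega : 1 ≤ J + 1)) ((by omega : J + 1 ≤ J + L + 2)),
      TT_peel_left θ ((by omega : J + 1 + 1 ≤ J + L + 2)),
      (by omega : J + 1 + 1 = J + 2)]
  have E1 : GG θ (J + 1) * GG θ (L + 1) * CC θ (J + 1) (L + 1)
        * (GG θ (J + L + 1) * TT θ (s + 1) (J + L + s + 2))
      = (GG θ (J + 1) * GG θ (J + L + 1) * GG θ L * CC θ (J + 1) L * TT θ 1 (L + 1)
          * TT θ (L + 2) (J + L + 2) * TT θ (s + 1) (s + J + 1)
          * TT θ (s + J + 2) (J + L + s + 2))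
        * (uu θ (J + L + 2) * uu θ (s + J + 1)) := by
    rw [x1, x4, y1, y2]; ring
  have E2 : GG θ (J + L + 2) * (GG θ (J + 1) * GG θ L * CC θ (J + 1) L
        * (TT θ s (s + J + 1) * TT θ (s + J + 2) (J + L + s + 2)))
      = (GG θ (J + 1) * GG θ (J + L + 1) * GG θ L * CC θ (J + 1) L * TT θ 1 (L + 1)
          * TT θ (L + 2) (J + L + 2) * TT θ (s + 1) (s + J + 1)
          * TT θ (s + J + 2) (J + L + s + 2))
        * (uu θ (L + 1) * uu θ s) := by
    rw [x3, y3, y4]; ring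
  have E3 : GG θ (J + L + 2) * (GG θ J * GG θ (L + 1) * CC θ J (L + 1)
        * (TT θ (s + 1) (s + J + 1) * TT θ (s + J + 2) (J + L + s + 3)))
      = (GG θ (J + 1) * GG θ (J + L + 1) * GG θ L * CC θ (J + 1) L * TT θ 1 (L + 1)
          * TT θ (L + 2) (J + L + 2) * TT θ (s + 1) (s + J + 1)
          * TT θ (s + J + 2) (J + L + s + 2))
        * (uu θ (J + 1) * uu θ (J + L + s + 2)) := by
    rw [x3, y6, x1, x6, y5, x2, x5]; ring
  have trig : uu θ (J + L + 2) * uu θ (s + J + 1)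
      = uu θ (L + 1) * uu θ s + uu θ (J + 1) * uu θ (J + L + s + 2) := by
    have e1 : ((J + L + 2 : ℕ) : ℝ) * θ = ((L + 1 : ℕ) : ℝ) * θ + ((J + 1 : ℕ) : ℝ) * θ := by
      push_cast; ring
    have e2 : ((s + J + 1 : ℕ) : ℝ) * θ = ((J + 1 : ℕ) : ℝ) * θ + ((s : ℕ) : ℝ) * θ := by
      push_cast; ring
    have e3 : ((J + L + s + 2 : ℕ) : ℝ) * θ
        = ((L + 1 : ℕ) : ℝ) * θ + ((J + 1 : ℕ) : ℝ) * θ + ((s : ℕ) : ℝ) * θ := by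
      push_cast; ring
    simp only [uu]
    rw [e1, e2, e3]
    exact sin_ptolemy _ _ _
  linear_combination E1 - E2 - E3
    + (GG θ (J + 1) * GG θ (J + L + 1) * GG θ L * CC θ (J + 1) L * TT θ 1 (L + 1)
        * TT θ (L + 2) (J + L + 2) * TT θ (s + 1) (s + J + 1)
        * TT θ (s + J + 2) (J + L + s + 2)) * trig
end

section
/- Let k ≥ 1 and 1 ≤ t ≤ k be integers, and θ ∈ ℝ with sin(jθ) ≠ 0 for all 1 ≤ j ≤ k−1. For a finite set S of positive integers with |S| = m and max(S) ≤ k+m−1, define A_S = {0,…,k+m−1} \ S, F(A) = ∏_{a<b ∈ A} sin((b−a)θ), and η_S = F(A_S)/F(A_∅); for m ≥ 1 set η_{[m]} with [m] = {1,…,m}, set η_{[0]} = 1, and set η_{[m]} = 0 for m < 0; also set η_{{0}} = 1. Let M be the t×t matrix over the polynomial ring ℝ[J, K] with entries M_{i,j} = η_{[j−i]}·K + η_{[j−i+1]}·J (so M_{i,j} = 0 for i > j+1 and M_{j+1,j} = J). Then det(M) = Σ_{s=0}^{t} η_{{s}} · J^{s} · K^{t−s}. -/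
namespace OrbPt
open Finset

noncomputable def g (θ : ℝ) (a b : ℕ) : ℝ :=
  if a < b then Real.sin (((b - a : ℕ) : ℝ) * θ) else 1

noncomputable def svf (θ : ℝ) (A : Finset ℕ) : ℝ := ∏ a ∈ A, ∏ b ∈ A, g θ a b

lemma sv_eq (θ : ℝ) (A : Finset ℕ) : sineVandermonde θ A = svf θ A := by
  rw [sineVandermonde, svf]
  rw [Finset.prod_filter, ← Finset.prod_product']
  exact Finset.prod_congr rfl (fun p _ => rfl)

lemma g_self (θ : ℝ) (a : ℕ) : g θ a a = 1 := by simp [g]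

lemma g_of_not_lt (θ : ℝ) {a b : ℕ} (h : ¬ a < b) : g θ a b = 1 := by simp [g, h]

lemma g_of_lt (θ : ℝ) {a b : ℕ} (h : a < b) : g θ a b = Real.sin (((b - a : ℕ) : ℝ) * θ) := by
  simp [g, h]

lemma svf_insert (θ : ℝ) {A : Finset ℕ} {c : ℕ} (hc : c ∉ A) :
    svf θ (insert c A) = (∏ x ∈ A, (g θ c x * g θ x c)) * svf θ A := by
  rw [svf, Finset.prod_insert hc]
  have h1 : ∏ b ∈ insert c A, g θ c b = ∏ b ∈ A, g θ c b := by
    rw [Finset.prod_insert hc, g_self, one_mul]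
  have h2 : ∀ a, (∏ b ∈ insert c A, g θ a b) = g θ a c * ∏ b ∈ A, g θ a b := by
    intro a; rw [Finset.prod_insert hc]
  rw [h1]
  rw [Finset.prod_congr rfl (fun a _ => h2 a), Finset.prod_mul_distrib]
  rw [svf, Finset.prod_mul_distrib]
  ring

lemma svf_image_add (θ : ℝ) (A : Finset ℕ) (m : ℕ) :
    svf θ (A.image (· + m)) = svf θ A := by
  have hinj : ∀ a ∈ A, ∀ b ∈ A, a + m = b + m → a = b := fun a _ b _ h => by omega
  rw [svf, Finset.prod_image hinj]
  apply Finset.prod_congr rfl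
  intro a _
  rw [Finset.prod_image hinj]
  apply Finset.prod_congr rfl
  intro b _
  unfold g
  have e : b + m - (a + m) = b - a := by omega
  by_cases h : a < b
  · have h' : a + m < b + m := by omega
    simp only [h, h', if_true, e]
  · have h' : ¬ (a + m < b + m) := by omega
    simp [h, h']

lemma svf_ne_zero (θ : ℝ) {n : ℕ} {A : Finset ℕ} (hA : A ⊆ range n)
    (h : ∀ d : ℕ, 1 ≤ d → d ≤ n - 1 → Real.sin ((d : ℝ) * θ) ≠ 0) :
    svf θ A ≠ 0 := by
  rw [svf]
  apply Finset.prod_ne_zero_iff.2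
  intro a ha
  apply Finset.prod_ne_zero_iff.2
  intro b hb
  unfold g
  by_cases hab : a < b
  · simp only [hab, if_true]
    apply h
    · omega
    · have := hA ha; have := hA hb
      simp only [mem_range] at *
      omega
  · simp [hab]

end OrbPt

namespace OrbPt
open Finset

section Gaps
variable {k : ℕ} {θ : ℝ}

lemma gap_empty (k : ℕ) : gapSet k ∅ = range k := by simp [gapSet]

lemma gap_Icc (hk : 1 ≤ k) (m : ℕ) :
    gapSet k (Finset.Icc 1 m) = insert 0 ((range (k-1)).image (· + (m+1))) := by
  ext x
  simp only [gapSet, Nat.card_Icc, mem_sdiff, mem_range, mem_Icc, mem_insert, mem_image]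
  constructor
  · rintro ⟨h1, h2⟩
    rcases Nat.eq_zero_or_pos x with h | h
    · exact Or.inl h
    · exact Or.inr ⟨x - (m+1), by omega, by beta_reduce; omega⟩
  · rintro (rfl | ⟨a, ha, rfl⟩) <;> beta_reduce <;> omega

lemma svf_gap_Icc (hk : 1 ≤ k) (m : ℕ) :
    svf θ (gapSet k (Finset.Icc 1 m)) =
      (∏ j ∈ range (k-1), Real.sin ((↑(m+1+j)) * θ)) * svf θ (range (k-1)) := by
  rw [gap_Icc hk m]
  have h0 : (0:ℕ) ∉ (range (k-1)).image (· + (m+1)) := by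
    simp only [mem_image, not_exists]
    intro a; beta_reduce; omega
  have hinj : ∀ a ∈ range (k-1), ∀ b ∈ range (k-1), a + (m+1) = b + (m+1) → a = b :=
    fun a _ b _ h => by omega
  rw [svf_insert θ h0, svf_image_add]
  congr 1
  rw [Finset.prod_image hinj]
  apply Finset.prod_congr rfl
  intro j hj
  rw [g_of_lt θ (show 0 < j + (m+1) by omega), g_of_not_lt θ (by omega), mul_one]
  have : j + (m+1) - 0 = m+1+j := by omega
  rw [this]

lemma range_succ_eq (n : ℕ) : range (n+1) = insert 0 ((range n).image (· + 1)) := by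
  ext x
  simp only [mem_range, mem_insert, mem_image]
  constructor
  · intro h
    rcases Nat.eq_zero_or_pos x with h' | h'
    · exact Or.inl h'
    · exact Or.inr ⟨x - 1, by omega, by beta_reduce; omega⟩
  · rintro (rfl | ⟨a, ha, rfl⟩) <;> beta_reduce <;> omega

lemma svf_range_succ (n : ℕ) :
    svf θ (range (n+1)) = (∏ j ∈ range n, Real.sin ((↑(1+j)) * θ)) * svf θ (range n) := by
  rw [range_succ_eq n]
  have h0 : (0:ℕ) ∉ (range n).image (· + 1) := by
    simp only [mem_image, not_exists]
    intro a; beta_reduce; omega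
  have hinj : ∀ a ∈ range n, ∀ b ∈ range n, a + 1 = b + 1 → a = b := fun a _ b _ h => by omega
  rw [svf_insert θ h0, svf_image_add]
  congr 1
  rw [Finset.prod_image hinj]
  apply Finset.prod_congr rfl
  intro j hj
  rw [g_of_lt θ (show 0 < j + 1 by omega), g_of_not_lt θ (by omega), mul_one]
  have : j + 1 - 0 = 1 + j := by omega
  rw [this]

lemma sin_nat_congr (θ : ℝ) {a b : ℕ} (h : a = b) :
    Real.sin ((↑a) * θ) = Real.sin ((↑b) * θ) := by rw [h]

variable (hθ : ∀ j : ℕ, 1 ≤ j → j ≤ k - 1 → Real.sin ((j : ℝ) * θ) ≠ 0)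
include hθ

lemma prod_sin_ne {n c : ℕ} (hn : c + n ≤ k - 1) :
    ∏ j ∈ range n, Real.sin ((↑(c+1+j)) * θ) ≠ 0 := by
  apply Finset.prod_ne_zero_iff.2
  intro j hj
  simp only [mem_range] at hj
  exact hθ (c+1+j) (by omega) (by omega)

lemma svf_range_ne {n : ℕ} (hn : n ≤ k) : svf θ (range n) ≠ 0 := by
  apply svf_ne_zero θ (subset_refl (range n))
  intro d h1 h2
  exact hθ d h1 (by omega)

lemma etaI_closed (hk : 1 ≤ k) {ηI : ℤ → ℝ}
    (hηI : ∀ m : ℤ, ηI m = if m < 0 then 0 else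
      sineVandermonde θ (gapSet k (Finset.Icc 1 m.toNat)) / sineVandermonde θ (gapSet k ∅))
    (m : ℕ) :
    ηI m = (∏ j ∈ range (k-1), Real.sin ((↑(m+1+j)) * θ))
         / (∏ j ∈ range (k-1), Real.sin ((↑(1+j)) * θ)) := by
  rw [hηI m, if_neg (by omega)]
  have ht : ((m:ℤ)).toNat = m := by omega
  rw [ht, sv_eq, sv_eq, svf_gap_Icc hk m, gap_empty]
  have hIcc : Finset.Icc 1 0 = (∅ : Finset ℕ) := by
    apply Finset.Icc_eq_empty; omega
  have h2 : svf θ (range k) = (∏ j ∈ range (k-1), Real.sin ((↑(1+j)) * θ)) * svf θ (range (k-1)) := by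
    have := svf_gap_Icc (θ := θ) hk 0
    rw [hIcc, gap_empty] at this
    rw [this]
  rw [h2, mul_div_mul_right _ _ (svf_range_ne hθ (by omega))]

omit hθ in
lemma gap_singleton (s : ℕ) : gapSet k {s} = (range (k+1)).erase s := by
  rw [gapSet, card_singleton, sdiff_singleton_eq_erase]

omit hθ in
lemma prod_gs_right (hs : s ≤ k) :
    ∏ x ∈ range (k+1), g θ s x = ∏ j ∈ range (k-s), Real.sin ((↑(1+j)) * θ) := by
  have hsplit : k+1 = (s+1) + (k-s) := by omega
  rw [hsplit, Finset.prod_range_add]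
  have h1 : ∏ i ∈ range (s+1), g θ s i = 1 := by
    apply Finset.prod_eq_one
    intro x hx
    simp only [mem_range] at hx
    exact g_of_not_lt θ (by omega)
  rw [h1, one_mul]
  apply Finset.prod_congr rfl
  intro j _
  rw [g_of_lt θ (show s < s+1+j by omega)]
  exact sin_nat_congr θ (by omega)

omit hθ in
lemma prod_gs_left (hs : s ≤ k) :
    ∏ x ∈ range (k+1), g θ x s = ∏ j ∈ range s, Real.sin ((↑(1+j)) * θ) := by
  have hsplit : k+1 = s + (k+1-s) := by omega
  rw [hsplit, Finset.prod_range_add]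
  have h2 : ∏ i ∈ range (k+1-s), g θ (s+i) s = 1 := by
    apply Finset.prod_eq_one
    intro x hx
    exact g_of_not_lt θ (by omega)
  
  rw [h2, mul_one, ← Finset.prod_range_reflect]
  apply Finset.prod_congr rfl
  intro j hj
  simp only [mem_range] at hj
  rw [g_of_lt θ (show s - 1 - j < s by omega)]
  exact sin_nat_congr θ (by omega)

omit hθ in
lemma svf_gap_singleton (hs : s ≤ k) :
    svf θ (range (k+1)) = ((∏ j ∈ range (k-s), Real.sin ((↑(1+j)) * θ))
      * ∏ j ∈ range s, Real.sin ((↑(1+j)) * θ)) * svf θ (gapSet k {s}) := by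
  have hmem : s ∈ range (k+1) := by simp; omega
  have h1 : svf θ (range (k+1)) = svf θ (insert s ((range (k+1)).erase s)) := by
    rw [Finset.insert_erase hmem]
  rw [h1, svf_insert θ (Finset.notMem_erase s _), gap_singleton]
  congr 1
  have h2 : ∏ x ∈ (range (k+1)).erase s, (g θ s x * g θ x s)
      = ∏ x ∈ range (k+1), (g θ s x * g θ x s) := by
    apply Finset.prod_erase
    rw [g_self, one_mul]
  rw [h2, Finset.prod_mul_distrib, prod_gs_right hs, prod_gs_left hs]

lemma etaS_closed (hk : 1 ≤ k) {ηS : ℕ → ℝ}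
    (hηS : ∀ s : ℕ, ηS s = if s = 0 then 1 else
      sineVandermonde θ (gapSet k {s}) / sineVandermonde θ (gapSet k ∅))
    {s : ℕ} (hs1 : 1 ≤ s) (hs2 : s ≤ k - 1) :
    ηS s = (∏ j ∈ range (k-s), Real.sin ((↑(s+1+j)) * θ))
         / (∏ j ∈ range (k-s), Real.sin ((↑(1+j)) * θ)) := by
  have E1 := svf_gap_singleton (θ := θ) (show s ≤ k by omega)
  have E2 : svf θ (range (k+1)) = ((∏ j ∈ range s, Real.sin ((↑(1+j)) * θ))
      * ∏ j ∈ range (k-s), Real.sin ((↑(s+1+j)) * θ)) * svf θ (range k) := by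
    rw [svf_range_succ k]
    congr 1
    conv_lhs => rw [show k = s + (k-s) from by omega]
    rw [Finset.prod_range_add]
    congr 1
    apply Finset.prod_congr rfl
    intro j _
    exact sin_nat_congr θ (by omega)
  have hcancel : (∏ j ∈ range (k-s), Real.sin ((↑(1+j)) * θ)) * svf θ (gapSet k {s})
      = (∏ j ∈ range (k-s), Real.sin ((↑(s+1+j)) * θ)) * svf θ (range k) := by
    have hne : (∏ j ∈ range s, Real.sin ((↑(1+j)) * θ)) ≠ 0 := by
      have := prod_sin_ne (θ := θ) hθ (n := s) (c := 0) (by omega)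
      simpa using this
    apply mul_left_cancel₀ hne
    calc (∏ j ∈ range s, Real.sin ((↑(1+j)) * θ)) *
          ((∏ j ∈ range (k-s), Real.sin ((↑(1+j)) * θ)) * svf θ (gapSet k {s}))
        = ((∏ j ∈ range (k-s), Real.sin ((↑(1+j)) * θ))
            * ∏ j ∈ range s, Real.sin ((↑(1+j)) * θ)) * svf θ (gapSet k {s}) := by ring
      _ = svf θ (range (k+1)) := E1.symm
      _ = _ := by rw [E2]; ring
  rw [hηS s, if_neg (by omega), sv_eq, sv_eq, gap_empty]
  rw [div_eq_div_iff (svf_range_ne hθ (by omega)) (prod_sin_ne (θ := θ) hθ (n := k - s) (c := 0) (by omega))]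
  calc svf θ (gapSet k {s}) * ∏ j ∈ range (k-s), Real.sin ((↑(0+1+j)) * θ)
      = (∏ j ∈ range (k-s), Real.sin ((↑(1+j)) * θ)) * svf θ (gapSet k {s}) := by
        rw [mul_comm]
    _ = (∏ j ∈ range (k-s), Real.sin ((↑(s+1+j)) * θ)) * svf θ (range k) := hcancel
    _ = _ := by ring

omit hθ in
lemma etaS_zero {ηS : ℕ → ℝ}
    (hηS : ∀ s : ℕ, ηS s = if s = 0 then 1 else
      sineVandermonde θ (gapSet k {s}) / sineVandermonde θ (gapSet k ∅)) : ηS 0 = 1 := by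
  rw [hηS 0, if_pos rfl]

lemma etaS_k (hk : 1 ≤ k) {ηS : ℕ → ℝ}
    (hηS : ∀ s : ℕ, ηS s = if s = 0 then 1 else
      sineVandermonde θ (gapSet k {s}) / sineVandermonde θ (gapSet k ∅)) : ηS k = 1 := by
  rw [hηS k, if_neg (by omega)]
  have h1 : gapSet k {k} = gapSet k ∅ := by
    rw [gap_singleton, gap_empty]
    ext x
    simp only [mem_erase, mem_range]
    omega
  rw [h1, sv_eq, gap_empty, div_self (svf_range_ne hθ (by omega))]

omit hθ in
lemma etaI_neg {ηI : ℤ → ℝ}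
    (hηI : ∀ m : ℤ, ηI m = if m < 0 then 0 else
      sineVandermonde θ (gapSet k (Finset.Icc 1 m.toNat)) / sineVandermonde θ (gapSet k ∅))
    {m : ℤ} (hm : m < 0) : ηI m = 0 := by
  rw [hηI m, if_pos hm]

lemma etaI_zero (hk : 1 ≤ k) {ηI : ℤ → ℝ}
    (hηI : ∀ m : ℤ, ηI m = if m < 0 then 0 else
      sineVandermonde θ (gapSet k (Finset.Icc 1 m.toNat)) / sineVandermonde θ (gapSet k ∅)) :
    ηI 0 = 1 := by
  have h := etaI_closed hθ hk hηI 0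
  simp only [Nat.cast_zero] at h
  rw [h]
  rw [show (∏ j ∈ range (k-1), Real.sin ((↑(0+1+j)) * θ)) = ∏ j ∈ range (k-1), Real.sin ((↑(1+j)) * θ) from rfl, div_self (prod_sin_ne (θ := θ) hθ (n := k-1) (c := 0) (by omega))]

end Gaps
end OrbPt

namespace OrbPt
open Finset Complex

section Cx
variable (θ : ℝ)

noncomputable def Ee (θ : ℝ) (m : ℤ) : ℂ := Complex.exp (m * θ * Complex.I)

lemma Ee_add (a b : ℤ) : Ee θ (a + b) = Ee θ a * Ee θ b := by
  rw [Ee, Ee, Ee, ← Complex.exp_add]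
  congr 1
  push_cast
  ring

lemma Ee_zero : Ee θ 0 = 1 := by simp [Ee]

lemma Ee_ne (m : ℤ) : Ee θ m ≠ 0 := Complex.exp_ne_zero _

lemma Ee_nat_mul (s : ℕ) (a : ℤ) : Ee θ (s * a) = (Ee θ a) ^ s := by
  rw [Ee, Ee, ← Complex.exp_nat_mul]
  congr 1
  push_cast
  ring

noncomputable def Sc (θ : ℝ) (m : ℤ) : ℂ := ((Real.sin (m * θ) : ℝ) : ℂ)

lemma Sc_eq (m : ℤ) : Sc θ m = (Ee θ (-m) - Ee θ m) * Complex.I / 2 := by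
  rw [Sc, Complex.ofReal_sin, Complex.sin]
  have h1 : -(((m : ℝ) * θ : ℝ) : ℂ) * Complex.I = ((-m : ℤ) : ℂ) * θ * Complex.I := by
    push_cast; ring
  have h2 : (((m : ℝ) * θ : ℝ) : ℂ) * Complex.I = ((m : ℤ) : ℂ) * θ * Complex.I := by
    push_cast; ring
  rw [h1, h2, Ee, Ee]

lemma Sc_congr {a b : ℤ} (h : a = b) : Sc θ a = Sc θ b := by rw [h]

lemma Ee_congr {a b : ℤ} (h : a = b) : Ee θ a = Ee θ b := by rw [h]

lemma prod_Sc_congr {n : ℕ} (f g : ℕ → ℤ) (h : ∀ j, f j = g j) :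
    ∏ j ∈ range n, Sc θ (f j) = ∏ j ∈ range n, Sc θ (g j) :=
  Finset.prod_congr rfl fun j _ => Sc_congr θ (h j)

lemma Sc_zero : Sc θ 0 = 0 := by simp [Sc]

lemma Sc_add_id (a b : ℤ) : Sc θ (a - b) + Ee θ a * Sc θ b = Ee θ b * Sc θ a := by
  rw [Sc_eq, Sc_eq, Sc_eq]
  have h1 : Ee θ (-(a-b)) = Ee θ (-a) * Ee θ b := by
    rw [show -(a-b) = -a + b from by ring, Ee_add]
  have h2 : Ee θ (a-b) = Ee θ a * Ee θ (-b) := by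
    rw [show a-b = a + -b from by ring, Ee_add]
  rw [h1, h2]
  ring

noncomputable def eps (q : ℂ) : ℕ → ℕ → ℂ
  | 0, 0 => 1
  | 0, _+1 => 0
  | n+1, 0 => eps q n 0
  | n+1, s+1 => eps q n (s+1) + q^n * eps q n s

lemma eps_zero (q : ℂ) : ∀ n, eps q n 0 = 1
  | 0 => rfl
  | n+1 => by rw [eps, eps_zero q n]

lemma eps_of_lt (q : ℂ) : ∀ n s, n < s → eps q n s = 0
  | 0, s+1, _ => rfl
  | n+1, s+1, h => by
      rw [eps, eps_of_lt q n (s+1) (by omega), eps_of_lt q n s (by omega)]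
      ring

lemma vieta (q Y : ℂ) : ∀ n, ∑ s ∈ range (n+1), (-1:ℂ)^s * eps q n s * Y^s
    = ∏ i ∈ range n, (1 - q^i * Y)
  | 0 => by simp [eps]
  | n+1 => by
      rw [Finset.prod_range_succ, ← vieta q Y n]
      rw [Finset.sum_range_succ' (fun s => (-1:ℂ)^s * eps q (n+1) s * Y^s)]
      have h1 : ∀ s, eps q (n+1) (s+1) = eps q n (s+1) + q^n * eps q n s := fun s => rfl
      have h2 : eps q (n+1) 0 = eps q n 0 := rfl
      simp only [h1, h2]
      have expand : ∀ s, (-1:ℂ)^(s+1) * (eps q n (s+1) + q^n * eps q n s) * Y^(s+1)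
          = (-1:ℂ)^(s+1) * eps q n (s+1) * Y^(s+1)
            + (-(q^n * Y)) * ((-1:ℂ)^s * eps q n s * Y^s) := by
        intro s; ring
      rw [Finset.sum_congr rfl (fun s _ => expand s), Finset.sum_add_distrib, ← Finset.mul_sum]
      have h3 : ∑ s ∈ range (n+1), (-1:ℂ)^(s+1) * eps q n (s+1) * Y^(s+1)
          + (-1:ℂ)^0 * eps q n 0 * Y^0
          = ∑ s ∈ range (n+2), (-1:ℂ)^s * eps q n s * Y^s := by
        rw [Finset.sum_range_succ' (fun s => (-1:ℂ)^s * eps q n s * Y^s)]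
      have h4 : ∑ s ∈ range (n+2), (-1:ℂ)^s * eps q n s * Y^s
          = ∑ s ∈ range (n+1), (-1:ℂ)^s * eps q n s * Y^s := by
        rw [Finset.sum_range_succ, eps_of_lt q n (n+1) (by omega)]
        ring
      calc ∑ s ∈ range (n+1), (-1:ℂ)^(s+1) * eps q n (s+1) * Y^(s+1)
            + (-(q^n * Y)) * ∑ s ∈ range (n+1), (-1:ℂ)^s * eps q n s * Y^s
            + (-1:ℂ)^0 * (eps q n 0) * Y^0
          = (∑ s ∈ range (n+2), (-1:ℂ)^s * eps q n s * Y^s)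
            + (-(q^n * Y)) * ∑ s ∈ range (n+1), (-1:ℂ)^s * eps q n s * Y^s := by
            rw [← h3]; ring
        _ = (∑ s ∈ range (n+1), (-1:ℂ)^s * eps q n s * Y^s) * (1 - q^n * Y) := by
            rw [h4]; ring

lemma bridge_step (n s' : ℕ) :
    Ee θ ((s'+1 : ℤ) * ((n:ℤ)-1)) * Sc θ ((n:ℤ) - (s':ℤ))
      + (Ee θ 2)^n * Ee θ ((s':ℤ) * ((n:ℤ)-1)) * Sc θ ((s':ℤ)+1)
    = Ee θ ((s'+1 : ℤ) * (n:ℤ)) * Sc θ ((n:ℤ)+1) := by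
  have key := Sc_add_id θ ((n:ℤ)+1) ((s':ℤ)+1)
  have harg : ((n:ℤ)+1) - ((s':ℤ)+1) = (n:ℤ) - (s':ℤ) := by ring
  rw [harg] at key
  have e1 : Ee θ ((s'+1 : ℤ) * ((n:ℤ)-1)) * Ee θ ((n:ℤ)+1)
      = (Ee θ 2)^n * Ee θ ((s':ℤ) * ((n:ℤ)-1)) := by
    rw [← Ee_nat_mul, ← Ee_add, ← Ee_add]
    congr 1
    ring
  have e2 : Ee θ ((s'+1 : ℤ) * ((n:ℤ)-1)) * Ee θ ((s':ℤ)+1)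
      = Ee θ ((s'+1 : ℤ) * (n:ℤ)) := by
    rw [← Ee_add]
    congr 1
    ring
  calc Ee θ ((s'+1 : ℤ) * ((n:ℤ)-1)) * Sc θ ((n:ℤ) - (s':ℤ))
        + (Ee θ 2)^n * Ee θ ((s':ℤ) * ((n:ℤ)-1)) * Sc θ ((s':ℤ)+1)
      = Ee θ ((s'+1 : ℤ) * ((n:ℤ)-1)) * (Sc θ ((n:ℤ) - (s':ℤ)) + Ee θ ((n:ℤ)+1) * Sc θ ((s':ℤ)+1)) := by
        rw [← e1]; ring
    _ = Ee θ ((s'+1 : ℤ) * ((n:ℤ)-1)) * (Ee θ ((s':ℤ)+1) * Sc θ ((n:ℤ)+1)) := by rw [key]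
    _ = _ := by rw [← e2]; ring

lemma bridge (n : ℕ) : ∀ s : ℕ, eps (Ee θ 2) n s * ∏ j ∈ range s, Sc θ (1+(j:ℤ))
    = Ee θ ((s:ℤ) * ((n:ℤ)-1)) * ∏ j ∈ range s, Sc θ ((n:ℤ) - (s:ℤ) + 1 + (j:ℤ)) := by
  induction n with
  | zero =>
    intro s
    match s with
    | 0 => simp [eps, Ee_zero]
    | s+1 =>
      have h0 : eps (Ee θ 2) 0 (s+1) = 0 := rfl
      rw [h0, zero_mul]
      symm
      apply mul_eq_zero_of_right
      apply Finset.prod_eq_zero (Finset.self_mem_range_succ s)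
      have hz : ∀ x : ℤ, x = 0 → Sc θ x = 0 := fun x h => by rw [h, Sc_zero]
      apply hz
      push_cast
      ring
  | succ n IH =>
    intro s
    match s with
    | 0 => simp [eps_zero, Ee_zero]
    | s'+1 =>
      have h1 : eps (Ee θ 2) (n+1) (s'+1)
          = eps (Ee θ 2) n (s'+1) + (Ee θ 2)^n * eps (Ee θ 2) n s' := rfl
      have IH1 := IH (s'+1)
      have IH2 := IH s'
      set Q' : ℂ := ∏ j ∈ range s', Sc θ (1+(j:ℤ)) with hQ'
      set P1 : ℂ := ∏ j ∈ range s', Sc θ ((n:ℤ) - (s':ℤ) + 1 + (j:ℤ)) with hP1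
      have hA : ∏ j ∈ range (s'+1), Sc θ (1+(j:ℤ)) = Q' * Sc θ ((s':ℤ)+1) := by
        rw [Finset.prod_range_succ]
        rw [show ((1:ℤ) + (s':ℤ)) = (s':ℤ)+1 from by ring]
      have hB1 : (∏ j ∈ range s', Sc θ (((n+1:ℕ):ℤ) - ((s'+1:ℕ):ℤ) + 1 + (j:ℤ))) = P1 := by
        rw [hP1]
        exact prod_Sc_congr θ _ _ (fun j => by push_cast; ring)
      have hB2 : Sc θ (((n+1:ℕ):ℤ) - ((s'+1:ℕ):ℤ) + 1 + (s':ℤ)) = Sc θ ((n:ℤ)+1) :=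
        Sc_congr θ (by push_cast; ring)
      have hB : ∏ j ∈ range (s'+1), Sc θ (((n+1:ℕ):ℤ) - ((s'+1:ℕ):ℤ) + 1 + (j:ℤ))
          = P1 * Sc θ ((n:ℤ)+1) := by
        rw [Finset.prod_range_succ, hB1, hB2]
      have hC1 : (∏ j ∈ range s', Sc θ ((n:ℤ) - ((s'+1:ℕ):ℤ) + 1 + ((j+1:ℕ):ℤ))) = P1 := by
        rw [hP1]
        exact prod_Sc_congr θ _ _ (fun j => by push_cast; ring)
      have hC2 : Sc θ ((n:ℤ) - ((s'+1:ℕ):ℤ) + 1 + ((0:ℕ):ℤ)) = Sc θ ((n:ℤ) - (s':ℤ)) :=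
        Sc_congr θ (by push_cast; ring)
      have hC : ∏ j ∈ range (s'+1), Sc θ ((n:ℤ) - ((s'+1:ℕ):ℤ) + 1 + (j:ℤ))
          = Sc θ ((n:ℤ) - (s':ℤ)) * P1 := by
        rw [Finset.prod_range_succ', hC1, hC2, mul_comm]
      have hIH1 : eps (Ee θ 2) n (s'+1) * (Q' * Sc θ ((s':ℤ)+1))
          = Ee θ (((s'+1:ℕ):ℤ) * ((n:ℤ)-1)) * (Sc θ ((n:ℤ) - (s':ℤ)) * P1) := by
        rw [← hA, ← hC, IH1]
      have hstep : Ee θ (((s'+1:ℕ):ℤ) * ((n:ℤ)-1)) * Sc θ ((n:ℤ) - (s':ℤ))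
            + (Ee θ 2)^n * Ee θ ((s':ℤ) * ((n:ℤ)-1)) * Sc θ ((s':ℤ)+1)
          = Ee θ (((s'+1:ℕ):ℤ) * (n:ℤ)) * Sc θ ((n:ℤ)+1) := by
        have := bridge_step θ n s'
        have c1 : ((s'+1:ℕ):ℤ) = (s':ℤ)+1 := by push_cast; ring
        rw [c1]
        exact this
      have hEe : Ee θ (((s'+1:ℕ):ℤ) * (((n+1:ℕ):ℤ)-1)) = Ee θ (((s'+1:ℕ):ℤ) * (n:ℤ)) := by
        apply Ee_congr
        push_cast
        ring
      calc eps (Ee θ 2) (n+1) (s'+1) * ∏ j ∈ range (s'+1), Sc θ (1+(j:ℤ))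
          = eps (Ee θ 2) n (s'+1) * (Q' * Sc θ ((s':ℤ)+1))
            + (Ee θ 2)^n * (eps (Ee θ 2) n s' * Q') * Sc θ ((s':ℤ)+1) := by
            rw [h1, hA]; ring
        _ = Ee θ (((s'+1:ℕ):ℤ) * ((n:ℤ)-1)) * (Sc θ ((n:ℤ) - (s':ℤ)) * P1)
            + (Ee θ 2)^n * (Ee θ ((s':ℤ) * ((n:ℤ)-1)) * P1) * Sc θ ((s':ℤ)+1) := by
            rw [hIH1, IH2]
        _ = (Ee θ (((s'+1:ℕ):ℤ) * ((n:ℤ)-1)) * Sc θ ((n:ℤ) - (s':ℤ))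
            + (Ee θ 2)^n * Ee θ ((s':ℤ) * ((n:ℤ)-1)) * Sc θ ((s':ℤ)+1)) * P1 := by ring
        _ = Ee θ (((s'+1:ℕ):ℤ) * (n:ℤ)) * Sc θ ((n:ℤ)+1) * P1 := by rw [hstep]
        _ = Ee θ (((s'+1:ℕ):ℤ) * (((n+1:ℕ):ℤ)-1)) * (P1 * Sc θ ((n:ℤ)+1)) := by
            rw [hEe]; ring
        _ = Ee θ (((s'+1:ℕ):ℤ) * (((n+1:ℕ):ℤ)-1))
            * ∏ j ∈ range (s'+1), Sc θ (((n+1:ℕ):ℤ) - ((s'+1:ℕ):ℤ) + 1 + (j:ℤ)) := by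
            rw [hB]

lemma eps_diag : ∀ n : ℕ, Ee θ ((n:ℤ) * (1 - (n:ℤ))) * eps (Ee θ 2) n n = 1
  | 0 => by simp [eps, Ee_zero]
  | n+1 => by
      have h1 : eps (Ee θ 2) (n+1) (n+1) = eps (Ee θ 2) n (n+1) + (Ee θ 2)^n * eps (Ee θ 2) n n := rfl
      rw [h1, eps_of_lt _ n (n+1) (by omega)]
      have h2 : Ee θ (((n+1:ℕ):ℤ) * (1 - ((n+1:ℕ):ℤ))) * (0 + (Ee θ 2)^n * eps (Ee θ 2) n n)
          = (Ee θ (((n+1:ℕ):ℤ) * (1 - ((n+1:ℕ):ℤ))) * (Ee θ 2)^n) * eps (Ee θ 2) n n := by ring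
      rw [h2, ← Ee_nat_mul, ← Ee_add]
      rw [show ((n+1:ℕ):ℤ) * (1 - ((n+1:ℕ):ℤ)) + (n:ℕ) * 2 = (n:ℤ) * (1 - (n:ℤ)) from by push_cast; ring]
      exact eps_diag n

end Cx
end OrbPt

namespace OrbPt
open Finset Complex

section Cx2
variable {k : ℕ} {θ : ℝ}

lemma Sc_natCast (θ : ℝ) (x : ℕ) :
    ((Real.sin ((x:ℝ) * θ) : ℝ) : ℂ) = Sc θ (x:ℤ) := by
  rw [Sc]
  norm_num

lemma Ee_sum (θ : ℝ) (A : Finset ℕ) (f : ℕ → ℤ) :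
    Ee θ (∑ j ∈ A, f j) = ∏ j ∈ A, Ee θ (f j) := by
  rw [Ee, show ((((∑ j ∈ A, f j : ℤ)):ℂ) * θ * Complex.I)
      = ∑ j ∈ A, (((f j : ℤ):ℂ) * θ * Complex.I) from by
    push_cast
    rw [Finset.sum_mul, Finset.sum_mul], Complex.exp_sum]
  exact Finset.prod_congr rfl (fun j _ => rfl)

variable (hθ : ∀ j : ℕ, 1 ≤ j → j ≤ k - 1 → Real.sin ((j : ℝ) * θ) ≠ 0)
include hθ

lemma Sc_ne {x : ℕ} (h1 : 1 ≤ x) (h2 : x ≤ k-1) : Sc θ (x:ℤ) ≠ 0 := by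
  rw [← Sc_natCast]
  exact Complex.ofReal_ne_zero.mpr (hθ x h1 h2)

lemma prod_Sc_ne {n : ℕ} (hn : n ≤ k-1) : (∏ j ∈ range n, Sc θ (1+(j:ℤ))) ≠ 0 := by
  apply Finset.prod_ne_zero_iff.2
  intro j hj
  simp only [mem_range] at hj
  rw [show (1 + (j:ℤ)) = ((1+j : ℕ) : ℤ) from by push_cast; ring]
  exact Sc_ne hθ (by omega) (by omega)

lemma etaS_eps (hk : 1 ≤ k) {ηS : ℕ → ℝ}
    (hηS : ∀ s : ℕ, ηS s = if s = 0 then 1 else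
      sineVandermonde θ (gapSet k {s}) / sineVandermonde θ (gapSet k ∅))
    {s : ℕ} (hs : s ≤ k) :
    ((ηS s : ℝ) : ℂ) = Ee θ ((s:ℤ) * (1 - (k:ℤ))) * eps (Ee θ 2) k s := by
  rcases Nat.eq_zero_or_pos s with rfl | hs1
  · rw [etaS_zero hηS]
    simp [eps_zero, Ee_zero]
  rcases eq_or_lt_of_le hs with rfl | hsk
  · rw [etaS_k hθ hk hηS, eps_diag θ s, Complex.ofReal_one]
  -- now 1 ≤ s ≤ k-1
  have hs2 : s ≤ k - 1 := by omega
  have hcast : ((ηS s : ℝ) : ℂ)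
      = (∏ j ∈ range (k-s), Sc θ ((s:ℤ)+1+(j:ℤ))) / (∏ j ∈ range (k-s), Sc θ (1+(j:ℤ))) := by
    rw [etaS_closed hθ hk hηS hs1 hs2]
    rw [Complex.ofReal_div]
    congr 1
    · rw [Complex.ofReal_prod]
      apply Finset.prod_congr rfl
      intro j _
      rw [Sc_natCast]
      exact Sc_congr θ (by push_cast; ring)
    · rw [Complex.ofReal_prod]
      apply Finset.prod_congr rfl
      intro j _
      rw [Sc_natCast]
      exact Sc_congr θ (by push_cast; ring)
  rw [hcast]
  have hb := bridge θ k s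
  set A : ℂ := ∏ j ∈ range (k-s), Sc θ ((s:ℤ)+1+(j:ℤ)) with hA
  set B : ℂ := ∏ j ∈ range (k-s), Sc θ (1+(j:ℤ)) with hBdef
  set As : ℂ := ∏ j ∈ range s, Sc θ ((k:ℤ) - (s:ℤ) + 1 + (j:ℤ)) with hAs
  set Bs : ℂ := ∏ j ∈ range s, Sc θ (1+(j:ℤ)) with hBs
  have hBne : B ≠ 0 := prod_Sc_ne hθ (by omega)
  have hBsne : Bs ≠ 0 := prod_Sc_ne hθ (by omega)
  have e1 : ∏ j ∈ range s, Sc θ (1+((k-s+j:ℕ):ℤ)) = As := by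
    rw [hAs]
    exact prod_Sc_congr θ _ _ (fun j => by omega)
  have e2 : ∏ j ∈ range (k-s), Sc θ (1+((s+j:ℕ):ℤ)) = A := by
    rw [hA]
    exact prod_Sc_congr θ _ _ (fun j => by omega)
  have claim1 : ∏ j ∈ range k, Sc θ (1+(j:ℤ)) = B * As := by
    conv_lhs => rw [show k = (k-s) + s from by omega]
    rw [Finset.prod_range_add, e1, ← hBdef]
  have claim2 : ∏ j ∈ range k, Sc θ (1+(j:ℤ)) = Bs * A := by
    conv_lhs => rw [show k = s + (k-s) from by omega]
    rw [Finset.prod_range_add, e2, ← hBs]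
  rw [div_eq_iff hBne]
  apply mul_right_cancel₀ hBsne
  have hE : Ee θ ((s:ℤ) * (1 - (k:ℤ))) * Ee θ ((s:ℤ) * ((k:ℤ)-1)) = 1 := by
    rw [← Ee_add, show (s:ℤ) * (1 - (k:ℤ)) + (s:ℤ) * ((k:ℤ)-1) = 0 from by ring, Ee_zero]
  calc A * Bs = As * B := by linear_combination claim1 - claim2
    _ = (Ee θ ((s:ℤ) * (1 - (k:ℤ))) * Ee θ ((s:ℤ) * ((k:ℤ)-1)) * As) * B := by rw [hE]; ring
    _ = Ee θ ((s:ℤ) * (1 - (k:ℤ))) * (Ee θ ((s:ℤ) * ((k:ℤ)-1)) * As) * B := by ring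
    _ = Ee θ ((s:ℤ) * (1 - (k:ℤ))) * (eps (Ee θ 2) k s * Bs) * B := by rw [← hb]
    _ = Ee θ ((s:ℤ) * (1 - (k:ℤ))) * eps (Ee θ 2) k s * B * Bs := by ring

end Cx2
end OrbPt

namespace OrbPt
open Finset Complex

section Cx3
variable {k : ℕ} {θ : ℝ}

noncomputable def Bc (θ : ℝ) (k : ℕ) (m : ℤ) : ℂ := ∏ j ∈ range (k-1), Sc θ (m + 1 + (j:ℤ))

lemma sum_shift (m : ℤ) (U : Finset ℕ) :
    ∑ j ∈ U, (m + 1 + (j:ℤ)) = (U.card : ℤ) * m + ∑ j ∈ U, (1 + (j:ℤ)) := by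
  calc ∑ j ∈ U, (m + 1 + (j:ℤ)) = ∑ j ∈ U, (m + (1 + (j:ℤ))) := by
        apply Finset.sum_congr rfl; intro j _; ring
    _ = ∑ _j ∈ U, m + ∑ j ∈ U, (1 + (j:ℤ)) := Finset.sum_add_distrib
    _ = (U.card : ℤ) * m + ∑ j ∈ U, (1 + (j:ℤ)) := by
        rw [Finset.sum_const, nsmul_eq_mul]

lemma Bc_expand (hk : 1 ≤ k) (m : ℤ) :
    Bc θ k m = ∑ T ∈ (range (k-1)).powerset,
      ((Complex.I/2)^(k-1) * (-1:ℂ)^(k-1-T.card)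
        * Ee θ ((∑ j ∈ range (k-1) \ T, (1+(j:ℤ))) - ∑ j ∈ T, (1+(j:ℤ))))
      * Ee θ (m * (((k:ℤ)-1) - 2*(T.card:ℤ))) := by
  rw [Bc]
  have h1 : ∀ j ∈ range (k-1), Sc θ (m+1+(j:ℤ))
      = (Ee θ (-(m+1+(j:ℤ))) + -(Ee θ (m+1+(j:ℤ)))) * (Complex.I/2) := by
    intro j _
    rw [Sc_eq]
    ring
  rw [Finset.prod_congr rfl h1, Finset.prod_mul_distrib, Finset.prod_const, Finset.card_range]
  rw [Finset.prod_add, Finset.sum_mul]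
  apply Finset.sum_congr rfl
  intro T hT
  have hsub : T ⊆ range (k-1) := Finset.mem_powerset.1 hT
  have hcard : T.card ≤ k-1 := by
    have := Finset.card_le_card hsub
    rwa [Finset.card_range] at this
  have hDcard : (range (k-1) \ T).card = k-1-T.card := by
    rw [Finset.card_sdiff_of_subset hsub, Finset.card_range]
  have hprod1 : ∏ j ∈ T, Ee θ (-(m+1+(j:ℤ))) = Ee θ (∑ j ∈ T, -(m+1+(j:ℤ))) :=
    (Ee_sum θ T _).symm
  have hprod2 : ∏ j ∈ range (k-1) \ T, (-(Ee θ (m+1+(j:ℤ))))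
      = (-1:ℂ)^(k-1-T.card) * Ee θ (∑ j ∈ range (k-1) \ T, (m+1+(j:ℤ))) := by
    calc ∏ j ∈ range (k-1) \ T, (-(Ee θ (m+1+(j:ℤ))))
        = ∏ j ∈ range (k-1) \ T, ((-1) * Ee θ (m+1+(j:ℤ))) :=
          Finset.prod_congr rfl (fun j _ => by ring)
      _ = _ := by rw [Finset.prod_mul_distrib, Finset.prod_const, hDcard, ← Ee_sum]
  rw [hprod1, hprod2]
  have hsumneg : ∑ j ∈ T, -(m+1+(j:ℤ)) = -((T.card:ℤ) * m + ∑ j ∈ T, (1+(j:ℤ))) := by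
    rw [Finset.sum_neg_distrib, sum_shift]
  have hsum2 : ∑ j ∈ range (k-1) \ T, (m+1+(j:ℤ))
      = (((range (k-1) \ T).card):ℤ) * m + ∑ j ∈ range (k-1) \ T, (1+(j:ℤ)) := sum_shift m _
  rw [hsumneg, hsum2, hDcard]
  have hEE : Ee θ (-((T.card:ℤ) * m + ∑ j ∈ T, (1+(j:ℤ))))
      * Ee θ ((((k-1-T.card:ℕ)):ℤ) * m + ∑ j ∈ range (k-1) \ T, (1+(j:ℤ)))
      = Ee θ ((∑ j ∈ range (k-1) \ T, (1+(j:ℤ))) - ∑ j ∈ T, (1+(j:ℤ)))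
        * Ee θ (m * (((k:ℤ)-1) - 2*(T.card:ℤ))) := by
    rw [← Ee_add, ← Ee_add]
    apply Ee_congr
    have hc : ((k-1-T.card:ℕ):ℤ) = ((k:ℤ)-1) - (T.card:ℤ) := by omega
    rw [hc]
    ring
  calc Ee θ (-((T.card:ℤ) * m + ∑ j ∈ T, (1+(j:ℤ))))
        * ((-1:ℂ)^(k-1-T.card) * Ee θ ((((k-1-T.card:ℕ)):ℤ) * m + ∑ j ∈ range (k-1) \ T, (1+(j:ℤ))))
        * (Complex.I/2)^(k-1)
      = (Ee θ (-((T.card:ℤ) * m + ∑ j ∈ T, (1+(j:ℤ))))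
          * Ee θ ((((k-1-T.card:ℕ)):ℤ) * m + ∑ j ∈ range (k-1) \ T, (1+(j:ℤ))))
        * ((-1:ℂ)^(k-1-T.card) * (Complex.I/2)^(k-1)) := by ring
    _ = _ := by rw [hEE]; ring

variable (hθ : ∀ j : ℕ, 1 ≤ j → j ≤ k - 1 → Real.sin ((j : ℝ) * θ) ≠ 0)
include hθ

lemma poly_prod (hk : 1 ≤ k) {ηS : ℕ → ℝ}
    (hηS : ∀ s : ℕ, ηS s = if s = 0 then 1 else
      sineVandermonde θ (gapSet k {s}) / sineVandermonde θ (gapSet k ∅)) (Y : ℂ) :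
    ∑ s ∈ range (k+1), (-1:ℂ)^s * ((ηS s : ℝ):ℂ) * Y^s
      = ∏ i ∈ range k, (1 - (Ee θ 2)^i * (Ee θ (1-(k:ℤ)) * Y)) := by
  rw [← vieta (Ee θ 2) (Ee θ (1-(k:ℤ)) * Y) k]
  apply Finset.sum_congr rfl
  intro s hs
  simp only [mem_range] at hs
  rw [etaS_eps hθ hk hηS (show s ≤ k by omega)]
  rw [mul_pow, ← Ee_nat_mul]
  ring

lemma KEY2 (hk : 1 ≤ k) {ηS : ℕ → ℝ}
    (hηS : ∀ s : ℕ, ηS s = if s = 0 then 1 else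
      sineVandermonde θ (gapSet k {s}) / sineVandermonde θ (gapSet k ∅))
    (t : ℕ) (ht1 : 1 ≤ t) (ht2 : t ≤ k) :
    ∑ s ∈ range (k+1), (-1:ℂ)^s * ((ηS s : ℝ):ℂ) * Bc θ k ((t:ℤ) - (s:ℤ)) = 0 := by
  have hE : ∀ s : ℕ, ∀ W : ℤ, Ee θ (((t:ℤ) - (s:ℤ)) * W) = Ee θ ((t:ℤ) * W) * (Ee θ (-W))^s := by
    intro s W
    rw [← Ee_nat_mul, ← Ee_add]
    apply Ee_congr
    ring
  calc ∑ s ∈ range (k+1), (-1:ℂ)^s * ((ηS s : ℝ):ℂ) * Bc θ k ((t:ℤ) - (s:ℤ))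
      = ∑ s ∈ range (k+1), ∑ T ∈ (range (k-1)).powerset,
          ((Complex.I/2)^(k-1) * (-1:ℂ)^(k-1-T.card)
            * Ee θ ((∑ j ∈ range (k-1) \ T, (1+(j:ℤ))) - ∑ j ∈ T, (1+(j:ℤ))))
          * (Ee θ ((t:ℤ) * (((k:ℤ)-1) - 2*(T.card:ℤ)))
             * ((-1:ℂ)^s * ((ηS s : ℝ):ℂ) * (Ee θ (-(((k:ℤ)-1) - 2*(T.card:ℤ))))^s)) := by
        apply Finset.sum_congr rfl
        intro s _
        rw [Bc_expand hk, Finset.mul_sum]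
        apply Finset.sum_congr rfl
        intro T _
        rw [hE s]
        ring
    _ = ∑ T ∈ (range (k-1)).powerset,
          ((Complex.I/2)^(k-1) * (-1:ℂ)^(k-1-T.card)
            * Ee θ ((∑ j ∈ range (k-1) \ T, (1+(j:ℤ))) - ∑ j ∈ T, (1+(j:ℤ))))
          * (Ee θ ((t:ℤ) * (((k:ℤ)-1) - 2*(T.card:ℤ)))
             * ∑ s ∈ range (k+1), ((-1:ℂ)^s * ((ηS s : ℝ):ℂ) * (Ee θ (-(((k:ℤ)-1) - 2*(T.card:ℤ))))^s)) := by
        rw [Finset.sum_comm]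
        apply Finset.sum_congr rfl
        intro T _
        rw [Finset.mul_sum, Finset.mul_sum]
    _ = 0 := by
        apply Finset.sum_eq_zero
        intro T hT
        have hcard : T.card ≤ k-1 := by
          have := Finset.card_le_card (Finset.mem_powerset.1 hT)
          rwa [Finset.card_range] at this
        have hzero : ∑ s ∈ range (k+1), ((-1:ℂ)^s * ((ηS s : ℝ):ℂ)
            * (Ee θ (-(((k:ℤ)-1) - 2*(T.card:ℤ))))^s) = 0 := by
          rw [poly_prod hθ hk hηS]
          apply Finset.prod_eq_zero (i := k-1-T.card) (by simp; omega)
          have harg : Ee θ (2 * ((k-1-T.card : ℕ):ℤ)) * (Ee θ (1-(k:ℤ))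
              * Ee θ (-(((k:ℤ)-1) - 2*(T.card:ℤ)))) = 1 := by
            rw [← Ee_add, ← Ee_add]
            rw [show (2 * ((k-1-T.card : ℕ):ℤ) + ((1-(k:ℤ)) + -(((k:ℤ)-1) - 2*(T.card:ℤ)))) = 0 from by omega]
            exact Ee_zero θ
          rw [show (2 * ((k-1-T.card : ℕ):ℤ)) = ((k-1-T.card : ℕ):ℤ) * 2 from by ring,
            Ee_nat_mul θ (k-1-T.card) 2] at harg
          rw [harg]
          norm_num
        rw [hzero]
        ring

end Cx3
end OrbPt

namespace OrbPt
open Finset Complex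

section Cx4
variable {k : ℕ} {θ : ℝ}
variable (hθ : ∀ j : ℕ, 1 ≤ j → j ≤ k - 1 → Real.sin ((j : ℝ) * θ) ≠ 0)

omit hθ in
lemma Bc_zero_eq : Bc θ k 0 = ∏ j ∈ range (k-1), Sc θ (1+(j:ℤ)) := by
  rw [Bc]
  exact prod_Sc_congr θ _ _ (fun j => by ring)

omit hθ in
lemma Bc_neg_zero {t s : ℕ} (ht1 : 1 ≤ t) (ht2 : t ≤ k) (h1 : t+1 ≤ s) (h2 : s ≤ k) :
    Bc θ k ((t:ℤ) - (s:ℤ)) = 0 := by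
  rw [Bc]
  apply Finset.prod_eq_zero (i := s - t - 1) (by simp only [mem_range]; omega)
  rw [show ((t:ℤ) - (s:ℤ) + 1 + ((s-t-1 : ℕ):ℤ)) = 0 from by omega, Sc_zero]

include hθ

lemma Bc_zero_ne : Bc θ k 0 ≠ 0 := by
  rw [Bc_zero_eq]
  exact prod_Sc_ne hθ (le_refl _)

lemma etaI_complex (hk : 1 ≤ k) {ηI : ℤ → ℝ}
    (hηI : ∀ m : ℤ, ηI m = if m < 0 then 0 else
      sineVandermonde θ (gapSet k (Finset.Icc 1 m.toNat)) / sineVandermonde θ (gapSet k ∅))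
    (e : ℕ) :
    ((ηI (e:ℤ) : ℝ) : ℂ) = Bc θ k ((e:ℕ):ℤ) / Bc θ k 0 := by
  rw [etaI_closed hθ hk hηI e, Complex.ofReal_div, Bc, Bc_zero_eq]
  congr 1
  · rw [Complex.ofReal_prod]
    apply Finset.prod_congr rfl
    intro j _
    rw [Sc_natCast]
    exact Sc_congr θ (by push_cast; ring)
  · rw [Complex.ofReal_prod]
    apply Finset.prod_congr rfl
    intro j _
    rw [Sc_natCast]
    exact Sc_congr θ (by push_cast; ring)

lemma KEYr (hk : 1 ≤ k) {ηI : ℤ → ℝ}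
    (hηI : ∀ m : ℤ, ηI m = if m < 0 then 0 else
      sineVandermonde θ (gapSet k (Finset.Icc 1 m.toNat)) / sineVandermonde θ (gapSet k ∅))
    {ηS : ℕ → ℝ}
    (hηS : ∀ s : ℕ, ηS s = if s = 0 then 1 else
      sineVandermonde θ (gapSet k {s}) / sineVandermonde θ (gapSet k ∅))
    (t : ℕ) (ht1 : 1 ≤ t) (ht2 : t ≤ k) :
    ∑ e ∈ range (t+1), (-1:ℝ)^e * ηI (e:ℤ) * ηS (t-e) = 0 := by
  have hsub : range (t+1) ⊆ range (k+1) := by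
    intro x hx
    simp only [mem_range] at *
    omega
  have H0 : ∑ s ∈ range (t+1), (-1:ℂ)^s * ((ηS s:ℝ):ℂ) * Bc θ k ((t:ℤ)-(s:ℤ)) = 0 := by
    rw [Finset.sum_subset hsub ?_]
    · exact KEY2 hθ hk hηS t ht1 ht2
    · intro s hs hns
      simp only [mem_range] at hs hns
      rw [Bc_neg_zero ht1 ht2 (by omega) (by omega)]
      ring
  have H2 : ∑ e ∈ range (t+1), (-1:ℂ)^(t-e) * ((ηS (t-e):ℝ):ℂ) * Bc θ k ((e:ℕ):ℤ) = 0 := by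
    calc ∑ e ∈ range (t+1), (-1:ℂ)^(t-e) * ((ηS (t-e):ℝ):ℂ) * Bc θ k ((e:ℕ):ℤ)
        = ∑ e ∈ range (t+1), (-1:ℂ)^(t+1-1-e) * ((ηS (t+1-1-e):ℝ):ℂ)
            * Bc θ k ((t:ℤ)-((t+1-1-e:ℕ):ℤ)) := by
          apply Finset.sum_congr rfl
          intro e he
          simp only [mem_range] at he
          rw [show t+1-1-e = t-e from by omega]
          congr 1
          congr 1
          omega
      _ = ∑ s ∈ range (t+1), (-1:ℂ)^s * ((ηS s:ℝ):ℂ) * Bc θ k ((t:ℤ)-(s:ℤ)) :=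
          Finset.sum_range_reflect (fun s => (-1:ℂ)^s * ((ηS s:ℝ):ℂ) * Bc θ k ((t:ℤ)-(s:ℤ))) (t+1)
      _ = 0 := H0
  have Tgt : ∑ e ∈ range (t+1), (-1:ℂ)^e * ((ηI (e:ℤ):ℝ):ℂ) * ((ηS (t-e):ℝ):ℂ) = 0 := by
    have expand : ∀ e ∈ range (t+1), (-1:ℂ)^e * ((ηI (e:ℤ):ℝ):ℂ) * ((ηS (t-e):ℝ):ℂ)
        = ((Bc θ k 0)⁻¹ * (-1:ℂ)^t) * ((-1:ℂ)^(t-e) * ((ηS (t-e):ℝ):ℂ) * Bc θ k ((e:ℕ):ℤ)) := by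
      intro e he
      simp only [mem_range] at he
      rw [etaI_complex hθ hk hηI e]
      have hsign : ((-1:ℂ))^e = (-1:ℂ)^t * (-1:ℂ)^(t-e) := by
        rw [← pow_add, show t + (t-e) = e + 2*(t-e) from by omega, pow_add, pow_mul]
        norm_num
      rw [hsign, div_eq_mul_inv]
      ring
    rw [Finset.sum_congr rfl expand, ← Finset.mul_sum, H2, mul_zero]
  have hcast : ((∑ e ∈ range (t+1), (-1:ℝ)^e * ηI (e:ℤ) * ηS (t-e) : ℝ) : ℂ) = 0 := by
    push_cast
    exact Tgt
  exact_mod_cast hcast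

end Cx4
end OrbPt

namespace OrbPt
open Finset

section Hess
variable {R : Type*} [CommRing R] (a : ℤ → R)

def Tm (n : ℕ) : Matrix (Fin n) (Fin n) R :=
  Matrix.of fun i j => a (((j:ℕ):ℤ) - ((i:ℕ):ℤ))

lemma minor_det (ha : ∀ m : ℤ, m < -1 → a m = 0) :
    ∀ (j n : ℕ), j ≤ n →
      (Matrix.of fun (i c : Fin n) =>
        a ((if (c:ℕ) < j then ((c:ℕ):ℤ) else ((c:ℕ):ℤ)+1) - (((i:ℕ):ℤ)+1))).det
      = (a (-1))^j * (Tm a (n-j)).det := by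
  intro j
  induction j with
  | zero =>
    intro n _
    have hmat : (Matrix.of fun (i c : Fin n) =>
        a ((if (c:ℕ) < 0 then ((c:ℕ):ℤ) else ((c:ℕ):ℤ)+1) - (((i:ℕ):ℤ)+1))) = Tm a n := by
      ext i c
      simp only [Matrix.of_apply, Tm]
      rw [if_neg (Nat.not_lt_zero _)]
      congr 1
      ring
    rw [hmat, pow_zero, one_mul, Nat.sub_zero]
  | succ j IH =>
    intro n hjn
    obtain ⟨n', rfl⟩ : ∃ n', n = n'+1 := ⟨n-1, by omega⟩
    rw [Matrix.det_succ_column_zero]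
    rw [Fintype.sum_eq_single (0 : Fin (n'+1)) ?_]
    swap
    · intro i hi
      have hi1 : 1 ≤ (i:ℕ) := by
        rcases Nat.eq_zero_or_pos (i:ℕ) with h | h
        · exact absurd (Fin.ext h : i = 0) hi
        · exact h
      have hz : (Matrix.of fun (i c : Fin (n'+1)) =>
          a ((if (c:ℕ) < j+1 then ((c:ℕ):ℤ) else ((c:ℕ):ℤ)+1) - (((i:ℕ):ℤ)+1))) i 0 = 0 := by
        simp only [Matrix.of_apply]
        rw [show (((0 : Fin (n'+1)):ℕ)) = 0 from rfl, if_pos (by omega)]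
        apply ha
        have : (1:ℤ) ≤ ((i:ℕ):ℤ) := by exact_mod_cast hi1
        omega
      rw [hz]
      ring
    · have h00 : (Matrix.of fun (i c : Fin (n'+1)) =>
          a ((if (c:ℕ) < j+1 then ((c:ℕ):ℤ) else ((c:ℕ):ℤ)+1) - (((i:ℕ):ℤ)+1))) 0 0 = a (-1) := by
        simp only [Matrix.of_apply]
        rw [show (((0 : Fin (n'+1)):ℕ)) = 0 from rfl, if_pos (by omega)]
        norm_num
      have hsub : ((Matrix.of fun (i c : Fin (n'+1)) =>
          a ((if (c:ℕ) < j+1 then ((c:ℕ):ℤ) else ((c:ℕ):ℤ)+1) - (((i:ℕ):ℤ)+1))).submatrix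
            (0 : Fin (n'+1)).succAbove Fin.succ)
          = Matrix.of (fun (i c : Fin n') =>
            a ((if (c:ℕ) < j then ((c:ℕ):ℤ) else ((c:ℕ):ℤ)+1) - (((i:ℕ):ℤ)+1))) := by
        ext i c
        simp only [Matrix.submatrix_apply, Matrix.of_apply, Fin.succAbove_zero, Fin.val_succ]
        by_cases h : (c:ℕ) < j
        · rw [if_pos (by omega : (c:ℕ)+1 < j+1), if_pos h]
          congr 1
          push_cast
          ring
        · rw [if_neg (by omega : ¬ ((c:ℕ)+1 < j+1)), if_neg h]
          congr 1
          push_cast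
          ring
      rw [h00, hsub, IH n' (by omega)]
      rw [show n'+1-(j+1) = n'-j from by omega]
      rw [pow_succ]
      simp only [Fin.val_zero, pow_zero]
      ring

lemma Tm_det_succ (ha : ∀ m : ℤ, m < -1 → a m = 0) (n : ℕ) :
    (Tm a (n+1)).det
      = ∑ j ∈ range (n+1), (-1:R)^j * a j * ((a (-1))^j * (Tm a (n-j)).det) := by
  rw [Matrix.det_succ_row_zero]
  rw [← Fin.sum_univ_eq_sum_range (fun j => (-1:R)^j * a j * ((a (-1))^j * (Tm a (n-j)).det)) (n+1)]
  apply Finset.sum_congr rfl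
  intro j _
  have h1 : (Tm a (n+1)) 0 j = a ((j:ℕ)) := by
    simp only [Tm, Matrix.of_apply]
    norm_num
  have h2 : (Tm a (n+1)).submatrix Fin.succ j.succAbove
      = Matrix.of (fun (i c : Fin n) =>
          a ((if (c:ℕ) < (j:ℕ) then ((c:ℕ):ℤ) else ((c:ℕ):ℤ)+1) - (((i:ℕ):ℤ)+1))) := by
    ext i c
    simp only [Matrix.submatrix_apply, Matrix.of_apply, Tm, Fin.val_succ]
    rcases lt_or_ge ((c:ℕ)) ((j:ℕ)) with h | h
    · rw [Fin.succAbove_of_castSucc_lt _ _ (by rw [Fin.lt_def]; simpa using h)]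
      rw [if_pos h]
      simp only [Fin.coe_castSucc]
      congr 1 <;> push_cast <;> ring
    · rw [Fin.succAbove_of_le_castSucc _ _ (by rw [Fin.le_def]; simpa using h)]
      rw [if_neg (not_lt.2 h)]
      simp only [Fin.val_succ]
      congr 1 <;> push_cast <;> ring
  rw [h1, h2, minor_det a ha (j:ℕ) n (by omega)]

end Hess
end OrbPt

namespace OrbPt
open Finset MvPolynomial

section Det

lemma sum_triangle {M : Type*} [AddCommMonoid M] (n : ℕ) (f : ℕ → ℕ → M) :
    ∑ j ∈ range (n+1), ∑ s ∈ range (n-j+1), f j s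
      = ∑ p ∈ range (n+1), ∑ j ∈ range (p+1), f j (p-j) := by
  rw [Finset.sum_sigma' (range (n+1)) (fun j => range (n-j+1)) (fun j s => f j s),
      Finset.sum_sigma' (range (n+1)) (fun p => range (p+1)) (fun p j => f j (p-j))]
  apply Finset.sum_nbij' (i := fun (x : Σ _ : ℕ, ℕ) => (⟨x.1 + x.2, x.1⟩ : Σ _ : ℕ, ℕ))
    (j := fun (x : Σ _ : ℕ, ℕ) => (⟨x.2, x.1 - x.2⟩ : Σ _ : ℕ, ℕ))
  · intro x hx
    simp only [Finset.mem_sigma, mem_range] at *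
    omega
  · intro x hx
    simp only [Finset.mem_sigma, mem_range] at *
    omega
  · intro x hx
    simp only [Finset.mem_sigma, mem_range] at hx
    obtain ⟨p, q⟩ := x
    simp only at hx ⊢
    rw [show p + q - p = q from by omega]
  · intro x hx
    simp only [Finset.mem_sigma, mem_range] at hx
    obtain ⟨p, q⟩ := x
    simp only at hx ⊢
    rw [show q + (p - q) = p from by omega]
  · intro x hx
    simp only [Finset.mem_sigma, mem_range] at hx
    obtain ⟨p, q⟩ := x
    simp only at hx ⊢
    rw [show p + q - p = q from by omega]

noncomputable def Ar (b : ℤ → ℝ) (c : ℕ → ℝ) (p : ℕ) : ℝ :=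
  ∑ j ∈ range (p+1), (-1:ℝ)^j * (b (j:ℤ) * c (p-j))

noncomputable def Dr (b : ℤ → ℝ) (c : ℕ → ℝ) (p : ℕ) : ℝ :=
  ∑ j ∈ range (p+1), (-1:ℝ)^j * (b ((j:ℤ)+1) * c (p-j))

lemma Ar_succ (b : ℤ → ℝ) (c : ℕ → ℝ) (hb0 : b 0 = 1) (p : ℕ) :
    Ar b c (p+1) = c (p+1) - Dr b c p := by
  rw [Ar, Finset.sum_range_succ' (fun j => (-1:ℝ)^j * (b (j:ℤ) * c (p+1-j)))]
  have h1 : ∀ j, (-1:ℝ)^(j+1) * (b ((j+1:ℕ):ℤ) * c (p+1-(j+1)))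
      = -((-1:ℝ)^j * (b ((j:ℤ)+1) * c (p-j))) := by
    intro j
    rw [show ((j+1:ℕ):ℤ) = (j:ℤ)+1 from by push_cast; ring,
        show p+1-(j+1) = p-j from by omega, pow_succ]
    ring
  rw [Finset.sum_congr rfl (fun j _ => h1 j), Finset.sum_neg_distrib]
  simp only [pow_zero, Nat.cast_zero, hb0, one_mul, Nat.sub_zero]
  rw [Dr]
  ring

lemma det_eval (k : ℕ) (b : ℤ → ℝ) (c : ℕ → ℝ)
    (hb0 : b 0 = 1) (hbneg : ∀ m : ℤ, m < 0 → b m = 0) (hc0 : c 0 = 1)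
    (key : ∀ t : ℕ, 1 ≤ t → t ≤ k →
      ∑ e ∈ range (t+1), (-1:ℝ)^e * b (e:ℤ) * c (t - e) = 0) :
    ∀ t : ℕ, t ≤ k →
      (Tm (fun m => MvPolynomial.C (b m) * MvPolynomial.X 1
        + MvPolynomial.C (b (m+1)) * MvPolynomial.X (0 : Fin 2)) t).det
      = ∑ s ∈ range (t+1), MvPolynomial.C (c s) * MvPolynomial.X (0:Fin 2) ^ s
          * MvPolynomial.X (1:Fin 2) ^ (t-s) := by
  set a : ℤ → MvPolynomial (Fin 2) ℝ :=
    fun m => MvPolynomial.C (b m) * MvPolynomial.X 1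
      + MvPolynomial.C (b (m+1)) * MvPolynomial.X (0 : Fin 2) with ha_def
  have ha : ∀ m : ℤ, m < -1 → a m = 0 := by
    intro m hm
    rw [ha_def]
    simp only
    rw [hbneg m (by omega), hbneg (m+1) (by omega)]
    simp
  have haneg : a (-1) = MvPolynomial.X 0 := by
    rw [ha_def]
    simp only
    rw [hbneg (-1) (by omega)]
    norm_num [show (-1:ℤ)+1 = 0 from by ring, hb0]
  intro t
  induction t using Nat.strong_induction_on with
  | _ t IH =>
    cases t with
    | zero =>
      intro _
      rw [show (Tm a 0).det = 1 from Matrix.det_fin_zero]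
      simp [hc0]
    | succ n =>
      intro htk
      rw [Tm_det_succ a ha n, haneg]
      have hIH : ∀ j ∈ range (n+1),
          (-1:MvPolynomial (Fin 2) ℝ)^j * a (j:ℤ)
            * ((MvPolynomial.X (0:Fin 2))^j * (Tm a (n-j)).det)
          = ∑ s ∈ range (n-j+1), ((-1:MvPolynomial (Fin 2) ℝ)^j * a (j:ℤ)
              * ((MvPolynomial.X (0:Fin 2))^j * (MvPolynomial.C (c s)
                * MvPolynomial.X (0:Fin 2) ^ s * MvPolynomial.X (1:Fin 2) ^ (n-j-s)))) := by
        intro j hj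
        simp only [mem_range] at hj
        rw [IH (n-j) (by omega) (by omega), Finset.mul_sum, Finset.mul_sum]
      rw [Finset.sum_congr rfl hIH]
      -- split each term into the K-part and the J-part
      have hsplit : ∀ j ∈ range (n+1), ∀ s ∈ range (n-j+1),
          (-1:MvPolynomial (Fin 2) ℝ)^j * a (j:ℤ)
            * ((MvPolynomial.X (0:Fin 2))^j * (MvPolynomial.C (c s)
              * MvPolynomial.X (0:Fin 2) ^ s * MvPolynomial.X (1:Fin 2) ^ (n-j-s)))
          = (-1:MvPolynomial (Fin 2) ℝ)^j * MvPolynomial.C (b (j:ℤ) * c s)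
              * (MvPolynomial.X (0:Fin 2)^(j+s) * MvPolynomial.X (1:Fin 2)^((n+1)-(j+s)))
            + (-1:MvPolynomial (Fin 2) ℝ)^j * MvPolynomial.C (b ((j:ℤ)+1) * c s)
              * (MvPolynomial.X (0:Fin 2)^((j+s)+1) * MvPolynomial.X (1:Fin 2)^(n-(j+s))) := by
        intro j hj s hs
        simp only [mem_range] at hj hs
        rw [ha_def]
        simp only
        rw [show (n+1)-(j+s) = (n-j-s)+1 from by omega,
            show n-(j+s) = n-j-s from by omega]
        rw [MvPolynomial.C_mul, MvPolynomial.C_mul, pow_succ, pow_add]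
        ring
      rw [Finset.sum_congr rfl (fun j hj => Finset.sum_congr rfl (fun s hs => hsplit j hj s hs))]
      rw [Finset.sum_congr rfl (fun j (hj : j ∈ range (n+1)) => Finset.sum_add_distrib),
          Finset.sum_add_distrib]
      rw [sum_triangle n (fun j s => (-1:MvPolynomial (Fin 2) ℝ)^j * MvPolynomial.C (b (j:ℤ) * c s)
            * (MvPolynomial.X (0:Fin 2)^(j+s) * MvPolynomial.X (1:Fin 2)^((n+1)-(j+s)))),
          sum_triangle n (fun j s => (-1:MvPolynomial (Fin 2) ℝ)^j * MvPolynomial.C (b ((j:ℤ)+1) * c s)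
            * (MvPolynomial.X (0:Fin 2)^((j+s)+1) * MvPolynomial.X (1:Fin 2)^(n-(j+s))))]
      -- collect coefficients
      have hCsign : ∀ (j:ℕ) (z : ℝ), (MvPolynomial.C ((-1:ℝ)^j * z) : MvPolynomial (Fin 2) ℝ)
          = (-1)^j * MvPolynomial.C z := by
        intro j z
        rw [MvPolynomial.C_mul, map_pow, map_neg, map_one]
      have hcol1 : ∀ p ∈ range (n+1),
          ∑ j ∈ range (p+1), ((-1:MvPolynomial (Fin 2) ℝ)^j * MvPolynomial.C (b (j:ℤ) * c (p-j))
            * (MvPolynomial.X (0:Fin 2)^(j+(p-j)) * MvPolynomial.X (1:Fin 2)^((n+1)-(j+(p-j)))))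
          = MvPolynomial.C (Ar b c p)
            * (MvPolynomial.X (0:Fin 2)^p * MvPolynomial.X (1:Fin 2)^((n+1)-p)) := by
        intro p _
        rw [Ar, map_sum, Finset.sum_mul]
        apply Finset.sum_congr rfl
        intro j hj
        simp only [mem_range] at hj
        rw [show j+(p-j) = p from by omega] <;> rw [hCsign] <;> ring
      have hcol2 : ∀ p ∈ range (n+1),
          ∑ j ∈ range (p+1), ((-1:MvPolynomial (Fin 2) ℝ)^j * MvPolynomial.C (b ((j:ℤ)+1) * c (p-j))
            * (MvPolynomial.X (0:Fin 2)^((j+(p-j))+1) * MvPolynomial.X (1:Fin 2)^(n-(j+(p-j)))))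
          = MvPolynomial.C (Dr b c p)
            * (MvPolynomial.X (0:Fin 2)^(p+1) * MvPolynomial.X (1:Fin 2)^(n-p)) := by
        intro p _
        rw [Dr, map_sum, Finset.sum_mul]
        apply Finset.sum_congr rfl
        intro j hj
        simp only [mem_range] at hj
        rw [show j+(p-j) = p from by omega] <;> rw [hCsign] <;> ring
      rw [Finset.sum_congr rfl hcol1, Finset.sum_congr rfl hcol2]
      -- final assembly
      have hDn : Dr b c n = c (n+1) := by
        have hk1 := key (n+1) (by omega) htk
        have hAr : Ar b c (n+1) = 0 := by
          rw [Ar, ← hk1]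
          apply Finset.sum_congr rfl
          intro e _
          ring
        have := Ar_succ b c hb0 n
        rw [hAr] at this
        linarith
      have hA0 : Ar b c 0 = c 0 := by
        rw [Ar]
        simp [hb0]
      rw [Finset.sum_range_succ' (fun p => MvPolynomial.C (Ar b c p)
            * (MvPolynomial.X (0:Fin 2)^p * MvPolynomial.X (1:Fin 2)^((n+1)-p))),
          Finset.sum_range_succ (fun p => MvPolynomial.C (Dr b c p)
            * (MvPolynomial.X (0:Fin 2)^(p+1) * MvPolynomial.X (1:Fin 2)^(n-p)))]
      rw [Finset.sum_range_succ (fun s => MvPolynomial.C (c s) * MvPolynomial.X (0:Fin 2)^s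
            * MvPolynomial.X (1:Fin 2)^((n+1)-s)),
          Finset.sum_range_succ' (fun s => MvPolynomial.C (c s) * MvPolynomial.X (0:Fin 2)^s
            * MvPolynomial.X (1:Fin 2)^((n+1)-s))]
      have hmid : ∀ p ∈ range n,
          MvPolynomial.C (Ar b c (p+1))
              * (MvPolynomial.X (0:Fin 2)^(p+1) * MvPolynomial.X (1:Fin 2)^((n+1)-(p+1)))
            + MvPolynomial.C (Dr b c p)
              * (MvPolynomial.X (0:Fin 2)^(p+1) * MvPolynomial.X (1:Fin 2)^(n-p))
          = MvPolynomial.C (c (p+1)) * MvPolynomial.X (0:Fin 2)^(p+1)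
              * MvPolynomial.X (1:Fin 2)^((n+1)-(p+1)) := by
        intro p _
        rw [show (n+1)-(p+1) = n-p from by omega, Ar_succ b c hb0 p, map_sub]
        ring
      calc (∑ p ∈ range n, MvPolynomial.C (Ar b c (p+1))
              * (MvPolynomial.X (0:Fin 2)^(p+1) * MvPolynomial.X (1:Fin 2)^((n+1)-(p+1)))
            + MvPolynomial.C (Ar b c 0)
              * (MvPolynomial.X (0:Fin 2)^0 * MvPolynomial.X (1:Fin 2)^((n+1)-0)))
          + (∑ p ∈ range n, MvPolynomial.C (Dr b c p)
              * (MvPolynomial.X (0:Fin 2)^(p+1) * MvPolynomial.X (1:Fin 2)^(n-p))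
            + MvPolynomial.C (Dr b c n)
              * (MvPolynomial.X (0:Fin 2)^(n+1) * MvPolynomial.X (1:Fin 2)^(n-n)))
          = (∑ p ∈ range n, (MvPolynomial.C (Ar b c (p+1))
              * (MvPolynomial.X (0:Fin 2)^(p+1) * MvPolynomial.X (1:Fin 2)^((n+1)-(p+1)))
            + MvPolynomial.C (Dr b c p)
              * (MvPolynomial.X (0:Fin 2)^(p+1) * MvPolynomial.X (1:Fin 2)^(n-p))))
            + MvPolynomial.C (Ar b c 0)
              * (MvPolynomial.X (0:Fin 2)^0 * MvPolynomial.X (1:Fin 2)^((n+1)-0))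
            + MvPolynomial.C (Dr b c n)
              * (MvPolynomial.X (0:Fin 2)^(n+1) * MvPolynomial.X (1:Fin 2)^(n-n)) := by
            rw [Finset.sum_add_distrib]
            ring
        _ = (∑ p ∈ range n, MvPolynomial.C (c (p+1)) * MvPolynomial.X (0:Fin 2)^(p+1)
              * MvPolynomial.X (1:Fin 2)^((n+1)-(p+1)))
            + MvPolynomial.C (c 0) * MvPolynomial.X (0:Fin 2)^0
              * MvPolynomial.X (1:Fin 2)^((n+1)-0)
            + MvPolynomial.C (c (n+1)) * MvPolynomial.X (0:Fin 2)^(n+1)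
              * MvPolynomial.X (1:Fin 2)^((n+1)-(n+1)) := by
            rw [Finset.sum_congr rfl hmid, hA0, hDn,
              show (n+1)-(n+1) = n-n from by omega]
            ring
        _ = _ := by ring

end Det
end OrbPt

open MvPolynomial in
/-- Toeplitz–Hessenberg determinant evaluation underlying the SL_k higher orbifold
Ptolemy relation: the determinant of the `t×t` matrix with entries
`η_{[j−i]}·K + η_{[j−i+1]}·J` (over `ℝ[J,K]`, with `J = X 0`, `K = X 1`) equals
`Σ_{s=0}^{t} η_{{s}} J^s K^{t−s}`. -/
theorem toeplitz_det_orbifold_ptolemy (k t : ℕ) (hk : 1 ≤ k) (ht1 : 1 ≤ t)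
    (ht2 : t ≤ k) (θ : ℝ)
    (hθ : ∀ j : ℕ, 1 ≤ j → j ≤ k - 1 → Real.sin ((j : ℝ) * θ) ≠ 0)
    (ηI : ℤ → ℝ)
    (hηI : ∀ m : ℤ, ηI m = if m < 0 then 0 else
      sineVandermonde θ (gapSet k (Finset.Icc 1 m.toNat)) / sineVandermonde θ (gapSet k ∅))
    (ηS : ℕ → ℝ)
    (hηS : ∀ s : ℕ, ηS s = if s = 0 then 1 else
      sineVandermonde θ (gapSet k {s}) / sineVandermonde θ (gapSet k ∅))
    (M : Matrix (Fin t) (Fin t) (MvPolynomial (Fin 2) ℝ))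
    (hM : ∀ i j : Fin t, M i j =
      MvPolynomial.C (ηI ((j : ℤ) - (i : ℤ))) * MvPolynomial.X 1
        + MvPolynomial.C (ηI ((j : ℤ) - (i : ℤ) + 1)) * MvPolynomial.X 0) :
    M.det = ∑ s ∈ Finset.range (t + 1),
      MvPolynomial.C (ηS s) * MvPolynomial.X 0 ^ s * MvPolynomial.X 1 ^ (t - s) := by
  have hb0 : ηI 0 = 1 := OrbPt.etaI_zero hθ hk hηI
  have hbneg : ∀ m : ℤ, m < 0 → ηI m = 0 := fun m hm => OrbPt.etaI_neg hηI hm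
  have hc0 : ηS 0 = 1 := OrbPt.etaS_zero hηS
  have key : ∀ t' : ℕ, 1 ≤ t' → t' ≤ k →
      ∑ e ∈ Finset.range (t'+1), (-1:ℝ)^e * ηI (e:ℤ) * ηS (t' - e) = 0 :=
    fun t' h1 h2 => OrbPt.KEYr hθ hk hηI hηS t' h1 h2
  have hM' : M = OrbPt.Tm (fun m => MvPolynomial.C (ηI m) * MvPolynomial.X 1
      + MvPolynomial.C (ηI (m+1)) * MvPolynomial.X (0:Fin 2)) t := by
    ext i j
    rw [hM i j]
    rfl
  rw [hM']
  exact OrbPt.det_eval k ηI ηS hb0 hbneg hc0 key t ht2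
end

section
/- For all integers ℓ ≥ 1 and d ≥ 0: Σ_{a=0}^{min(ℓ−1, d)} C(ℓ−1, a) · C(ℓ−1+a, ℓ−1) · C(d+ℓ−1, d−a) = C(d+ℓ−1, ℓ−1)², where C(n, k) denotes the binomial coefficient. -/
/-- Binomial identity counting degree-`d` cluster monomials in type `C_{ℓ−1}`:
`Σ_{a=0}^{min(ℓ−1,d)} C(ℓ−1,a)·C(ℓ−1+a,ℓ−1)·C(d+ℓ−1,d−a) = C(d+ℓ−1,ℓ−1)²`. -/
theorem cluster_monomial_count_identity (ℓ d : ℕ) (hℓ : 1 ≤ ℓ) :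
    ∑ a ∈ Finset.range (min (ℓ - 1) d + 1),
        Nat.choose (ℓ - 1) a * Nat.choose (ℓ - 1 + a) (ℓ - 1)
          * Nat.choose (d + ℓ - 1) (d - a)
      = (Nat.choose (d + ℓ - 1) (ℓ - 1)) ^ 2 := by
  set n := ℓ - 1 with hn
  have hN : d + ℓ - 1 = d + n := by omega
  rw [hN]
  -- termwise rewriting
  have hterm : ∀ a ∈ Finset.range (min n d + 1),
      Nat.choose n a * Nat.choose (n + a) n * Nat.choose (d + n) (d - a)
        = Nat.choose (d + n) n * (Nat.choose n a * Nat.choose d a) := by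
    intro a ha
    simp only [Finset.mem_range] at ha
    have had : a ≤ d := by omega
    have h1 : Nat.choose (d + n) (d - a) = Nat.choose (d + n) (n + a) := by
      have : (d + n) - (d - a) = n + a := by omega
      rw [← this, Nat.choose_symm (by omega)]
    have h2 : Nat.choose (d + n) (n + a) * Nat.choose (n + a) n
        = Nat.choose (d + n) n * Nat.choose d a := by
      have := Nat.choose_mul (n := d + n) (k := n + a) (s := n)
        (by omega)
      simpa [Nat.add_sub_cancel_left, show d + n - n = d by omega] using this
    rw [h1]
    calc Nat.choose n a * Nat.choose (n + a) n * Nat.choose (d + n) (n + a)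
        = Nat.choose n a * (Nat.choose (d + n) (n + a) * Nat.choose (n + a) n) := by ring
      _ = Nat.choose n a * (Nat.choose (d + n) n * Nat.choose d a) := by rw [h2]
      _ = Nat.choose (d + n) n * (Nat.choose n a * Nat.choose d a) := by ring
  rw [Finset.sum_congr rfl hterm, ← Finset.mul_sum]
  -- Vandermonde
  have hvand : ∑ a ∈ Finset.range (d + 1), Nat.choose n a * Nat.choose d a
      = Nat.choose (d + n) n := by
    have := Nat.add_choose_eq n d d
    rw [Finset.Nat.sum_antidiagonal_eq_sum_range_succ_mk] at this
    have hsym : ∀ a ∈ Finset.range (d + 1),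
        Nat.choose n a * Nat.choose d (d - a) = Nat.choose n a * Nat.choose d a := by
      intro a ha
      simp only [Finset.mem_range] at ha
      rw [Nat.choose_symm (by omega)]
    rw [Finset.sum_congr rfl hsym] at this
    rw [← this, Nat.add_comm n d, Nat.choose_symm_add]
  have hsub : ∑ a ∈ Finset.range (min n d + 1), Nat.choose n a * Nat.choose d a
      = ∑ a ∈ Finset.range (d + 1), Nat.choose n a * Nat.choose d a := by
    apply Finset.sum_subset
    · exact Finset.range_subset_range.2 (by omega)
    · intro a ha hna
      simp only [Finset.mem_range] at ha hna
      have : n < a := by omega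
      simp [Nat.choose_eq_zero_of_lt this]
  rw [hsub, hvand, sq]
end
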